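/- arXiv:1703.02674 — 8 statements merged into one kernel-verified Lean document; each statement's English description precedes it below -/
import Mathlib

section
/- Let A be a real n×m matrix with full row rank n, and let k be an integer with n ≤ k ≤ m. Then the sum over all subsets S of {1,…,m} of cardinality k of det(A_S A_Sᵀ) equals the binomial coefficient C(m−n, k−n) times det(A Aᵀ); that is, ∑_{S ⊆ {1,…,m}, |S| = k} det(A_S A_Sᵀ) = C(m−n, k−n) · det(A Aᵀ). -/
open Matrix BigOperators

/-- The n×n Gram matrix `A_S * A_Sᵀ` of the columns of `A` indexed by `S`. -/
def dvsGram {n m : ℕ} (A : Matrix (Fin n) (Fin m) ℝ) (S : Finset (Fin m)) :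
    Matrix (Fin n) (Fin n) ℝ :=
  Matrix.of fun i j => ∑ t ∈ S, A i t * A j t

/-- Squared maximal minor of `A` with columns `T` (0 if `T` has the wrong size). -/
noncomputable def minorSq {n m : ℕ} (A : Matrix (Fin n) (Fin m) ℝ) (T : Finset (Fin m)) : ℝ :=
  if h : T.card = n then (A.submatrix id (T.orderEmbOfFin h)).det ^ 2 else 0

lemma dvs_step1 {n m : ℕ} (A : Matrix (Fin n) (Fin m) ℝ) (S : Finset (Fin m)) :
    (dvsGram A S).det
      = ∑ r ∈ Fintype.piFinset (fun _ : Fin n => S),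
          (∏ i, A i (r i)) * (A.submatrix id r).det := by
  have h1 : (dvsGram A S) = fun i => ∑ t ∈ S, A i t • (Aᵀ t) := by
    ext i j
    simp [dvsGram, Finset.sum_apply, Matrix.transpose_apply]
  rw [show (dvsGram A S).det = Matrix.detRowAlternating (dvsGram A S) from rfl, h1]
  erw [(Matrix.detRowAlternating :
      AlternatingMap ℝ (Fin n → ℝ) ℝ (Fin n)).toMultilinearMap.map_sum_finset
    (fun i t => A i t • (Aᵀ t)) (fun _ => S)]
  refine Finset.sum_congr rfl fun r _ => ?_
  have h2 := (Matrix.detRowAlternating :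
      AlternatingMap ℝ (Fin n → ℝ) ℝ (Fin n)).toMultilinearMap.map_smul_univ
    (fun i => A i (r i)) (fun i => Aᵀ (r i))
  erw [h2]
  rw [smul_eq_mul]
  congr 1
  have : (fun i => Aᵀ (r i)) = Aᵀ.submatrix r id := rfl
  erw [this]
  show (Aᵀ.submatrix r id).det = (A.submatrix id r).det
  rw [← Matrix.det_transpose (A.submatrix id r), Matrix.transpose_submatrix]

lemma dvs_fiber_sum {n m : ℕ} (A : Matrix (Fin n) (Fin m) ℝ)
    (S T : Finset (Fin m)) (hT : T ⊆ S) (hc : T.card = n) :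
    ∑ r ∈ (Fintype.piFinset (fun _ : Fin n => S)).filter
        (fun r => Finset.image r Finset.univ = T),
      (∏ i, A i (r i)) * (A.submatrix id r).det
      = (A.submatrix id (T.orderEmbOfFin hc)).det ^ 2 := by
  classical
  set e := T.orderEmbOfFin hc with he
  have himg : Finset.image (⇑e) Finset.univ = T := by
    apply Finset.eq_of_subset_of_card_le
    · intro x hx
      simp only [Finset.mem_image] at hx
      obtain ⟨i, _, rfl⟩ := hx
      exact T.orderEmbOfFin_mem hc i
    · rw [Finset.card_image_of_injective _ e.injective, Finset.card_univ, Fintype.card_fin, hc]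
  have key : ∑ r ∈ (Fintype.piFinset (fun _ : Fin n => S)).filter
        (fun r => Finset.image r Finset.univ = T),
      (∏ i, A i (r i)) * (A.submatrix id r).det
      = ∑ σ : Equiv.Perm (Fin n),
          (∏ i, A i (e (σ i))) * (A.submatrix id (⇑e ∘ ⇑σ)).det := by
    refine (Finset.sum_bij (fun (σ : Equiv.Perm (Fin n)) _ => (⇑e ∘ ⇑σ : Fin n → Fin m))
      ?_ ?_ ?_ ?_).symm
    · intro σ _
      refine Finset.mem_filter.2 ⟨?_, ?_⟩
      · refine Fintype.mem_piFinset.2 fun i => hT ?_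
        exact T.orderEmbOfFin_mem hc _
      · rw [show Finset.image (⇑e ∘ ⇑σ) Finset.univ
            = Finset.image (⇑e) (Finset.image (⇑σ) Finset.univ) from
            (Finset.image_image).symm, Finset.image_univ_equiv, himg]
    · intro σ₁ _ σ₂ _ h
      exact Equiv.ext fun i => e.injective (congrFun h i)
    · intro r hr
      obtain ⟨hrS, hrT⟩ := Finset.mem_filter.1 hr
      have hinj : Function.Injective r := by
        have hcard : (Finset.image r Finset.univ).card = n := by rw [hrT, hc]
        have := Finset.card_image_iff.1 (by
          rw [hcard, Finset.card_univ, Fintype.card_fin])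
        intro a b hab
        exact this (Finset.mem_coe.2 (Finset.mem_univ a)) (Finset.mem_coe.2 (Finset.mem_univ b)) hab
      have hex : ∀ i, ∃ j, e j = r i := by
        intro i
        have : r i ∈ T := by
          rw [← hrT]; exact Finset.mem_image_of_mem r (Finset.mem_univ i)
        rw [← himg] at this
        obtain ⟨j, _, hj⟩ := Finset.mem_image.1 this
        exact ⟨j, hj⟩
      set g : Fin n → Fin n := fun i => (hex i).choose with hg
      have hge : ∀ i, e (g i) = r i := fun i => (hex i).choose_spec
      have hginj : Function.Injective g := by
        intro a b hab
        apply hinj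
        rw [← hge a, ← hge b, hab]
      refine ⟨Equiv.ofBijective g (Finite.injective_iff_bijective.1 hginj),
        Finset.mem_univ _, ?_⟩
      funext i
      exact hge i
    · intro σ _
      rfl
  rw [key]
  have hsub : ∀ σ : Equiv.Perm (Fin n),
      (A.submatrix id (⇑e ∘ ⇑σ)) = (A.submatrix id ⇑e).submatrix id ⇑σ := fun σ => rfl
  set N := A.submatrix id ⇑e with hN
  have hterm : ∀ σ : Equiv.Perm (Fin n),
      (∏ i, A i (e (σ i))) * (A.submatrix id (⇑e ∘ ⇑σ)).det
      = ((Equiv.Perm.sign σ : ℝ) * ∏ i, Nᵀ (σ i) i) * N.det := by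
    intro σ
    rw [hsub, Matrix.det_permute']
    simp only [N, Matrix.transpose_apply, Matrix.submatrix_apply, id]
    ring
  rw [Finset.sum_congr rfl fun σ _ => hterm σ, ← Finset.sum_mul, ← Matrix.det_apply',
    Matrix.det_transpose, sq]

lemma dvs_cauchy_binet {n m : ℕ} (A : Matrix (Fin n) (Fin m) ℝ) (S : Finset (Fin m)) :
    (dvsGram A S).det = ∑ T ∈ S.powersetCard n, minorSq A T := by
  classical
  rw [dvs_step1]
  rw [← Finset.sum_filter_of_ne (p := fun r => (Finset.image r Finset.univ).card = n)
    (by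
      intro r _ hne
      by_contra hcard
      have hni : ¬ Function.Injective r := by
        intro hinj
        exact hcard (by rw [Finset.card_image_of_injective _ hinj, Finset.card_univ,
          Fintype.card_fin])
      obtain ⟨a, b, hab, hne'⟩ : ∃ a b, r a = r b ∧ a ≠ b := by
        simp only [Function.Injective, not_forall] at hni
        obtain ⟨a, b, h1, h2⟩ := hni
        exact ⟨a, b, h1, h2⟩
      have : (A.submatrix id r).det = 0 :=
        Matrix.det_zero_of_column_eq hne' (fun k => by simp [Matrix.submatrix_apply, hab])
      exact hne (by rw [this, mul_zero]))]
  rw [← Finset.sum_fiberwise_of_maps_to (g := fun r => Finset.image r Finset.univ)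
      (t := S.powersetCard n)
    (by
      intro r hr
      rw [Finset.mem_filter] at hr
      refine Finset.mem_powersetCard.2 ⟨?_, hr.2⟩
      intro x hx
      obtain ⟨i, _, rfl⟩ := Finset.mem_image.1 hx
      exact Fintype.mem_piFinset.1 hr.1 i)]
  refine Finset.sum_congr rfl fun T hT => ?_
  obtain ⟨hTS, hTc⟩ := Finset.mem_powersetCard.1 hT
  rw [Finset.filter_filter]
  have hfe : ((Fintype.piFinset (fun _ : Fin n => S)).filter
        (fun r => (Finset.image r Finset.univ).card = n ∧ Finset.image r Finset.univ = T))
      = (Fintype.piFinset (fun _ : Fin n => S)).filter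
        (fun r => Finset.image r Finset.univ = T) := by
    apply Finset.filter_congr
    intro r _
    constructor
    · exact fun h => h.2
    · exact fun h => ⟨by rw [h, hTc], h⟩
  rw [hfe, dvs_fiber_sum A S T hTS hTc, minorSq, dif_pos hTc]

lemma dvs_count_supersets {n m k : ℕ} (hnk : n ≤ k) (T : Finset (Fin m))
    (hT : T.card = n) :
    ((Finset.univ.powersetCard k).filter (fun S : Finset (Fin m) => T ⊆ S)).card
      = (m - n).choose (k - n) := by
  classical
  have : ((Finset.univ.powersetCard k).filter (fun S : Finset (Fin m) => T ⊆ S)).card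
      = (Tᶜ.powersetCard (k - n)).card := by
    apply Finset.card_bij' (fun S _ => S \ T) (fun U _ => U ∪ T)
    · intro S hS
      rw [Finset.mem_filter, Finset.mem_powersetCard] at hS
      obtain ⟨⟨_, hSc⟩, hTS⟩ := hS
      refine Finset.mem_powersetCard.2 ⟨?_, ?_⟩
      · intro x hx
        rw [Finset.mem_compl]
        exact (Finset.mem_sdiff.1 hx).2
      · rw [Finset.card_sdiff_of_subset hTS, hSc, hT]
    · intro U hU
      rw [Finset.mem_powersetCard] at hU
      obtain ⟨hUT, hUc⟩ := hU
      have hdisj : Disjoint U T := by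
        rw [Finset.disjoint_left]
        intro x hx
        exact Finset.mem_compl.1 (hUT hx)
      refine Finset.mem_filter.2 ⟨Finset.mem_powersetCard.2 ⟨Finset.subset_univ _, ?_⟩,
        Finset.subset_union_right⟩
      rw [Finset.card_union_of_disjoint hdisj, hUc, hT]
      omega
    · intro S hS
      rw [Finset.mem_filter] at hS
      exact Finset.sdiff_union_of_subset hS.2
    · intro U hU
      rw [Finset.mem_powersetCard] at hU
      apply Finset.union_sdiff_cancel_right
      rw [Finset.disjoint_left]
      intro x hx
      exact Finset.mem_compl.1 (hU.1 hx)
  rw [this, Finset.card_powersetCard, Finset.card_compl, Fintype.card_fin, hT]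

/-- **Partition function of dual volume sampling.**  For a real `n × m` matrix `A` of
full row rank `n` and `n ≤ k ≤ m`,
`∑_{|S| = k} det(A_S A_Sᵀ) = C(m - n, k - n) ⋅ det(A Aᵀ)`. -/
theorem dvs_partition_function {n m : ℕ} (A : Matrix (Fin n) (Fin m) ℝ)
    (hA : A.rank = n) (k : ℕ) (hnk : n ≤ k) (hkm : k ≤ m) :
    ∑ S ∈ Finset.univ.powersetCard k, (dvsGram A S).det
      = ((m - n).choose (k - n) : ℝ) * (A * Aᵀ).det := by
  classical
  have hAAT : (A * Aᵀ) = dvsGram A Finset.univ := by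
    ext i j
    simp [Matrix.mul_apply, dvsGram, Matrix.transpose_apply]
  rw [hAAT, dvs_cauchy_binet A Finset.univ]
  calc ∑ S ∈ Finset.univ.powersetCard k, (dvsGram A S).det
      = ∑ S ∈ Finset.univ.powersetCard k, ∑ T ∈ Finset.univ.powersetCard n,
          (if T ⊆ S then minorSq A T else 0) := by
        refine Finset.sum_congr rfl fun S hS => ?_
        rw [dvs_cauchy_binet, ← Finset.sum_filter]
        congr 1
        ext T
        simp only [Finset.mem_filter, Finset.mem_powersetCard, Finset.subset_univ, true_and]
        tauto
    _ = ∑ T ∈ Finset.univ.powersetCard n, ∑ S ∈ Finset.univ.powersetCard k,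
          (if T ⊆ S then minorSq A T else 0) := Finset.sum_comm
    _ = ∑ T ∈ Finset.univ.powersetCard n,
          ((m - n).choose (k - n) : ℝ) * minorSq A T := by
        refine Finset.sum_congr rfl fun T hT => ?_
        obtain ⟨-, hTc⟩ := Finset.mem_powersetCard.1 hT
        rw [← Finset.sum_filter, Finset.sum_const,
          dvs_count_supersets hnk T hTc, nsmul_eq_mul]
    _ = ((m - n).choose (k - n) : ℝ) * ∑ T ∈ Finset.univ.powersetCard n, minorSq A T := by
        rw [Finset.mul_sum]
end

section
/- Let A be a real n×m matrix with full row rank n, let k be an integer with n ≤ k ≤ m, and let T ⊆ {1,…,m} with |T| ≤ k be such that the submatrix A_T has rank n (so A_T A_Tᵀ is invertible). Let T_c = {1,…,m} \ T. Then ∑_{S : T ⊆ S ⊆ {1,…,m}, |S| = k} det(A_S A_Sᵀ) = det(A_T A_Tᵀ) · e_{k−|T|}( I_{|T_c|} + A_{T_c}ᵀ (A_T A_Tᵀ)^{-1} A_{T_c} ), where e_j(M) denotes the sum of the determinants of all j×j principal submatrices of the square matrix M. -/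
open Matrix BigOperators

/-- The `n × |T|` submatrix of `A` formed by the columns indexed by `T`. -/
def dvsCols {n m : ℕ} (A : Matrix (Fin n) (Fin m) ℝ) (T : Finset (Fin m)) :
    Matrix (Fin n) {x // x ∈ T} ℝ :=
  A.submatrix id (fun p => p.1)

lemma dvs_isUnit_of_rank {N : ℕ} (M : Matrix (Fin N) (Fin N) ℝ) (h : M.rank = N) : IsUnit M := by
  rw [← Matrix.mulVec_surjective_iff_isUnit]
  have htop : LinearMap.range M.mulVecLin = ⊤ := by
    apply Submodule.eq_top_of_finrank_eq
    simpa [Matrix.rank] using h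
  have hs : Function.Surjective M.mulVecLin := LinearMap.range_eq_top.mp htop
  exact fun v => (hs v).imp fun w hw => by simpa using hw

lemma dvs_det_add {N : ℕ} {G : Matrix (Fin N) (Fin N) ℝ} (hG : IsUnit G.det)
    {ι : Type*} [Fintype ι] [DecidableEq ι] (D : Matrix (Fin N) ι ℝ) :
    (G + D * Dᵀ).det = G.det * (1 + Dᵀ * G⁻¹ * D).det := by
  have h1 : G + D * Dᵀ = G * (1 + G⁻¹ * D * Dᵀ) := by
    rw [mul_add, mul_one, ← Matrix.mul_assoc, ← Matrix.mul_assoc,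
      Matrix.mul_nonsing_inv G hG, Matrix.one_mul]
  rw [h1, Matrix.det_mul, Matrix.det_one_add_mul_comm, ← Matrix.mul_assoc]

lemma dvsGram_eq {n m : ℕ} (A : Matrix (Fin n) (Fin m) ℝ) (T : Finset (Fin m)) :
    dvsGram A T = dvsCols A T * (dvsCols A T)ᵀ := by
  ext i j
  rw [Matrix.mul_apply, Finset.univ_eq_attach]
  simp only [dvsGram, dvsCols, Matrix.of_apply, Matrix.transpose_apply,
    Matrix.submatrix_apply, id_eq]
  exact (Finset.sum_attach T (fun t => A i t * A j t)).symm

lemma dvs_key {n m : ℕ} (A : Matrix (Fin n) (Fin m) ℝ) (T : Finset (Fin m))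
    (hG : IsUnit (dvsGram A T).det) (R : Finset {x // x ∈ Tᶜ}) :
    (dvsGram A (T ∪ R.map (Function.Embedding.subtype _))).det
      = (dvsGram A T).det *
        ((((1 : Matrix {x // x ∈ Tᶜ} {x // x ∈ Tᶜ} ℝ)
            + (dvsCols A Tᶜ)ᵀ * (dvsGram A T)⁻¹ * dvsCols A Tᶜ)).submatrix
          (fun p : {y // y ∈ R} => p.1) (fun p : {y // y ∈ R} => p.1)).det := by
  set D : Matrix (Fin n) {y // y ∈ R} ℝ := Matrix.of (fun i p => A i p.1.1) with hD
  have hdisj : Disjoint T (R.map (Function.Embedding.subtype (· ∈ Tᶜ))) := by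
    rw [Finset.disjoint_right]
    rintro a ha
    simp only [Finset.mem_map, Function.Embedding.coe_subtype] at ha
    obtain ⟨⟨a', ha'⟩, -, rfl⟩ := ha
    exact fun h => (Finset.mem_compl.mp ha') h
  have hGram : dvsGram A (T ∪ R.map (Function.Embedding.subtype _))
      = dvsGram A T + D * Dᵀ := by
    ext i j
    simp only [dvsGram, Matrix.of_apply, Matrix.add_apply]
    rw [Finset.sum_union hdisj, Finset.sum_map]
    congr 1
    rw [Matrix.mul_apply, Finset.univ_eq_attach]
    simp only [hD, Matrix.of_apply, Matrix.transpose_apply, Function.Embedding.coe_subtype]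
    exact (Finset.sum_attach R (fun x => A i x.1 * A j x.1)).symm
  have hsub : (1 : Matrix {y // y ∈ R} {y // y ∈ R} ℝ) + Dᵀ * (dvsGram A T)⁻¹ * D
      = (((1 : Matrix {x // x ∈ Tᶜ} {x // x ∈ Tᶜ} ℝ)
            + (dvsCols A Tᶜ)ᵀ * (dvsGram A T)⁻¹ * dvsCols A Tᶜ)).submatrix
          (fun p : {y // y ∈ R} => p.1) (fun p : {y // y ∈ R} => p.1) := by
    ext p q
    simp only [Matrix.submatrix_apply, Matrix.add_apply, Matrix.mul_apply,
      Matrix.transpose_apply, Matrix.one_apply, dvsCols, Matrix.of_apply, hD,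
      Matrix.submatrix_apply, id_eq, Subtype.val_inj]
  rw [hGram, dvs_det_add hG, hsub]

/-- **Marginals of dual volume sampling.**  For a full-row-rank real `n × m` matrix `A`,
`n ≤ k ≤ m`, and `T ⊆ {1,…,m}` with `|T| ≤ k` such that `A_T` has rank `n`,
`∑_{T ⊆ S, |S| = k} det(A_S A_Sᵀ)
  = det(A_T A_Tᵀ) ⋅ e_{k - |T|}( I + A_{T_c}ᵀ (A_T A_Tᵀ)⁻¹ A_{T_c} )`,
where `T_c = {1,…,m} \ T` and `e_j(M) = ∑_{|R| = j} det(M_{R,R})`. -/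
theorem dvs_marginal {n m : ℕ} (A : Matrix (Fin n) (Fin m) ℝ) (hA : A.rank = n)
    (k : ℕ) (hnk : n ≤ k) (hkm : k ≤ m)
    (T : Finset (Fin m)) (hTk : T.card ≤ k) (hT : (dvsCols A T).rank = n) :
    ∑ S ∈ (Finset.univ.powersetCard k).filter (fun S => T ⊆ S), (dvsGram A S).det
      = (dvsGram A T).det *
        ∑ R ∈ (Finset.univ.powersetCard (k - T.card) : Finset (Finset {x // x ∈ Tᶜ})),
          ((((1 : Matrix {x // x ∈ Tᶜ} {x // x ∈ Tᶜ} ℝ)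
              + (dvsCols A Tᶜ)ᵀ * (dvsGram A T)⁻¹ * dvsCols A Tᶜ)).submatrix
            (fun p : {y // y ∈ R} => p.1) (fun p : {y // y ∈ R} => p.1)).det := by
  classical
  have hG : IsUnit (dvsGram A T).det := by
    rw [← Matrix.isUnit_iff_isUnit_det]
    apply dvs_isUnit_of_rank
    rw [dvsGram_eq, Matrix.rank_self_mul_transpose, hT]
  rw [Finset.mul_sum]
  refine Finset.sum_nbij' (fun S => S.subtype (· ∈ Tᶜ))
    (fun R => T ∪ R.map (Function.Embedding.subtype _)) ?_ ?_ ?_ ?_ ?_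
  · -- maps to
    intro S hS
    simp only [Finset.mem_filter, Finset.mem_powersetCard_univ] at hS
    rw [Finset.mem_powersetCard_univ, Finset.card_subtype]
    have : S.filter (· ∈ Tᶜ) = S \ T := by
      ext x; simp [Finset.mem_compl, Finset.mem_sdiff]
    rw [this, Finset.card_sdiff_of_subset hS.2, hS.1]
  · -- maps back
    intro R hR
    rw [Finset.mem_powersetCard_univ] at hR
    have hdisj : Disjoint T (R.map (Function.Embedding.subtype (· ∈ Tᶜ))) := by
      rw [Finset.disjoint_right]
      rintro a ha
      simp only [Finset.mem_map, Function.Embedding.coe_subtype] at ha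
      obtain ⟨⟨a', ha'⟩, -, rfl⟩ := ha
      exact fun h => (Finset.mem_compl.mp ha') h
    simp only [Finset.mem_filter, Finset.mem_powersetCard_univ]
    constructor
    · rw [Finset.card_union_of_disjoint hdisj, Finset.card_map, hR]
      omega
    · exact Finset.subset_union_left
  · -- left inverse
    intro S hS
    simp only [Finset.mem_filter, Finset.mem_powersetCard_univ] at hS
    rw [Finset.subtype_map]
    have : S.filter (· ∈ Tᶜ) = S \ T := by
      ext x; simp [Finset.mem_compl, Finset.mem_sdiff]
    rw [this, Finset.union_sdiff_of_subset hS.2]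
  · -- right inverse
    intro R hR
    ext x
    simp only [Finset.mem_subtype, Finset.mem_union, Finset.mem_map,
      Function.Embedding.coe_subtype]
    constructor
    · rintro (h | ⟨y, hy, hxy⟩)
      · exact absurd h (Finset.mem_compl.mp x.2)
      · rwa [← Subtype.ext hxy.symm] at hy
    · intro hx
      exact Or.inr ⟨x, hx, rfl⟩
  · -- values
    intro S hS
    simp only [Finset.mem_filter, Finset.mem_powersetCard_univ] at hS
    have hback : T ∪ (S.subtype (· ∈ Tᶜ)).map (Function.Embedding.subtype _) = S := by
      rw [Finset.subtype_map]
      have : S.filter (· ∈ Tᶜ) = S \ T := by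
        ext x; simp [Finset.mem_compl, Finset.mem_sdiff]
      rw [this, Finset.union_sdiff_of_subset hS.2]
    conv_lhs => rw [← hback]
    exact dvs_key A T hG (S.subtype (· ∈ Tᶜ))
end

section
/- Let A be a real n×m matrix such that for every S ⊆ {1,…,m} with |S| ≥ n the submatrix A_S has full row rank n, and let k be an integer with n ≤ k ≤ m. Then there exists a subset S ⊆ {1,…,m} with |S| = k such that both: (1) tr((A_S A_Sᵀ)^{-1}) ≤ ((m−n+1)/(k−n+1)) · tr((A Aᵀ)^{-1}), and (2) λ_min(A_S A_Sᵀ) ≥ ((k−n+1)/(n(m−n+1))) · λ_min(A Aᵀ), where λ_min denotes the smallest eigenvalue of a real symmetric positive definite matrix. (Equivalently, in terms of the Moore–Penrose pseudoinverse: ‖A_S^†‖_F² ≤ ((m−n+1)/(k−n+1))‖A^†‖_F² and ‖A_S^†‖_2² ≤ (n(m−n+1)/(k−n+1))‖A^†‖_2².) -/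
open Matrix BigOperators

theorem dvsGram_isHermitian {n m : ℕ} (A : Matrix (Fin n) (Fin m) ℝ) (S : Finset (Fin m)) :
    (dvsGram A S).IsHermitian := by
  unfold Matrix.IsHermitian
  ext i j
  simp only [dvsGram, Matrix.conjTranspose_apply, Matrix.of_apply, star_trivial]
  exact Finset.sum_congr rfl fun t _ => mul_comm _ _

/-- The smallest eigenvalue `λ_min(A_S A_Sᵀ)` of the Gram matrix. -/
noncomputable def dvsLamMin {n m : ℕ} (A : Matrix (Fin n) (Fin m) ℝ) (S : Finset (Fin m)) : ℝ :=
  ⨅ i, (dvsGram_isHermitian A S).eigenvalues i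

/-! ### Auxiliary lemmas on rank-one matrices -/

section VMV
variable {n : ℕ}

lemma dvs_mul_vecMulVec (N : Matrix (Fin n) (Fin n) ℝ) (u v : Fin n → ℝ) :
    N * vecMulVec u v = vecMulVec (N *ᵥ u) v := by
  ext i j
  simp [Matrix.mul_apply, vecMulVec_apply, Matrix.mulVec, dotProduct,
    Finset.sum_mul, mul_assoc]

lemma dvs_vecMulVec_mul (N : Matrix (Fin n) (Fin n) ℝ) (u v : Fin n → ℝ) :
    vecMulVec u v * N = vecMulVec u (v ᵥ* N) := by
  ext i j
  simp [Matrix.mul_apply, vecMulVec_apply, Matrix.vecMul, dotProduct,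
    Finset.mul_sum, mul_assoc]

lemma dvs_vecMulVec_mul_vecMulVec (u v x y : Fin n → ℝ) :
    vecMulVec u v * vecMulVec x y = (v ⬝ᵥ x) • vecMulVec u y := by
  ext i j
  simp only [Matrix.mul_apply, vecMulVec_apply, Matrix.smul_apply, dotProduct,
    smul_eq_mul, Finset.sum_mul, Finset.mul_sum]
  rw [Finset.sum_congr rfl]
  intro k _
  ring

lemma dvs_trace_vecMulVec (u v : Fin n → ℝ) :
    (vecMulVec u v).trace = u ⬝ᵥ v := by
  simp [Matrix.trace, Matrix.diag, vecMulVec_apply, dotProduct]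

lemma dvs_vecMulVec_mulVec (u v w : Fin n → ℝ) :
    vecMulVec u v *ᵥ w = (v ⬝ᵥ w) • u := by
  ext i
  simp [vecMulVec_apply, Matrix.mulVec, dotProduct, Finset.mul_sum, mul_assoc,
    mul_comm, mul_left_comm]

end VMV

/-! ### Positive definiteness of the Gram matrices -/

section Gram

variable {n m : ℕ} (A : Matrix (Fin n) (Fin m) ℝ)

lemma dvsGram_eq_sum (S : Finset (Fin m)) :
    dvsGram A S = ∑ j ∈ S, vecMulVec (fun i => A i j) (fun i => A i j) := by
  ext i j
  rw [Matrix.sum_apply]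
  simp [dvsGram, vecMulVec_apply]

lemma dvsGram_eq_mul (S : Finset (Fin m)) :
    dvsGram A S = dvsCols A S * (dvsCols A S)ᵀ := by
  ext i j
  simp only [dvsGram, Matrix.of_apply, Matrix.mul_apply, Matrix.transpose_apply,
    dvsCols, Matrix.submatrix_apply, id_eq]
  exact (Finset.sum_coe_sort S (fun t => A i t * A j t)).symm

lemma dvsGram_posDef (hrank : ∀ S : Finset (Fin m), n ≤ S.card → (dvsCols A S).rank = n)
    (S : Finset (Fin m)) (hS : n ≤ S.card) : (dvsGram A S).PosDef := by
  set B := dvsCols A S with hB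
  have hrk : Bᵀ.rank = n := by rw [Matrix.rank_transpose]; exact hrank S hS
  have hker : LinearMap.ker (Bᵀ.mulVecLin) = ⊥ := by
    have h2 := LinearMap.finrank_range_add_finrank_ker (Bᵀ.mulVecLin)
    have h3 : Module.finrank ℝ (LinearMap.range Bᵀ.mulVecLin) = n := hrk
    rw [h3, Module.finrank_pi ℝ, Fintype.card_fin] at h2
    have h4 : Module.finrank ℝ (LinearMap.ker Bᵀ.mulVecLin) = 0 := by omega
    exact Submodule.finrank_eq_zero.mp h4
  refine Matrix.PosDef.of_dotProduct_mulVec_pos (dvsGram_isHermitian A S) fun x hx => ?_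
  have hq : star x ⬝ᵥ (dvsGram A S *ᵥ x) = (x ᵥ* B) ⬝ᵥ (x ᵥ* B) := by
    rw [dvsGram_eq_mul, star_trivial, ← Matrix.mulVec_mulVec, Matrix.dotProduct_mulVec,
      Matrix.mulVec_transpose]
  rw [hq]
  have hu : x ᵥ* B ≠ 0 := by
    intro h0
    apply hx
    have : x ∈ LinearMap.ker (Bᵀ.mulVecLin) := by
      simp only [LinearMap.mem_ker, Matrix.mulVecLin_apply, Matrix.mulVec_transpose]
      exact h0
    rw [hker] at this
    simpa using this
  have h1 : (x ᵥ* B) ⬝ᵥ (x ᵥ* B) ≠ 0 := fun h => hu (dotProduct_self_eq_zero.mp h)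
  have h2 : 0 ≤ (x ᵥ* B) ⬝ᵥ (x ᵥ* B) :=
    Finset.sum_nonneg fun i _ => mul_self_nonneg _
  exact lt_of_le_of_ne h2 (Ne.symm h1)

end Gram

/-! ### Trace of the inverse of a positive definite matrix -/

section Spec

variable {n : ℕ}

lemma dvs_inv_eq {M : Matrix (Fin n) (Fin n) ℝ} (hM : M.PosDef) :
    M⁻¹ = (hM.1.eigenvectorUnitary : Matrix (Fin n) (Fin n) ℝ) *
      diagonal (fun i => (hM.1.eigenvalues i)⁻¹) *
      star (hM.1.eigenvectorUnitary : Matrix (Fin n) (Fin n) ℝ) := by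
  set U : Matrix (Fin n) (Fin n) ℝ := (hM.1.eigenvectorUnitary : Matrix (Fin n) (Fin n) ℝ) with hU
  set d : Fin n → ℝ := hM.1.eigenvalues with hdd
  have hUU : star U * U = 1 := Matrix.mem_unitaryGroup_iff'.mp hM.1.eigenvectorUnitary.2
  have hUU' : U * star U = 1 := Matrix.mem_unitaryGroup_iff.mp hM.1.eigenvectorUnitary.2
  have hd : ∀ i, d i ≠ 0 := fun i => (hM.eigenvalues_pos i).ne'
  have hspec : M = U * diagonal d * star U := by
    have h := hM.1.spectral_theorem
    rw [Unitary.conjStarAlgAut_apply] at h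
    simpa [hU, hdd] using h
  apply Matrix.inv_eq_right_inv
  rw [hspec]
  calc U * diagonal d * star U * (U * diagonal (fun i => (d i)⁻¹) * star U)
      = U * diagonal d * (star U * U) * (diagonal (fun i => (d i)⁻¹) * star U) := by
        simp only [Matrix.mul_assoc]
    _ = U * (diagonal d * diagonal (fun i => (d i)⁻¹)) * star U := by
        rw [hUU]; simp only [Matrix.mul_one, Matrix.mul_assoc]
    _ = 1 := by
        rw [Matrix.diagonal_mul_diagonal]
        have h1 : (fun i => d i * (d i)⁻¹) = fun _ => (1:ℝ) := by
          funext i; exact mul_inv_cancel₀ (hd i)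
        rw [h1, Matrix.diagonal_one, Matrix.mul_one, hUU']

lemma dvs_trace_inv {M : Matrix (Fin n) (Fin n) ℝ} (hM : M.PosDef) :
    M⁻¹.trace = ∑ i, (hM.1.eigenvalues i)⁻¹ := by
  rw [dvs_inv_eq hM, Matrix.trace_mul_cycle]
  rw [Matrix.mem_unitaryGroup_iff'.mp hM.1.eigenvectorUnitary.2, Matrix.one_mul,
    Matrix.trace_diagonal]

lemma dvs_trace_inv_nonneg {M : Matrix (Fin n) (Fin n) ℝ} (hM : M.PosDef) :
    0 ≤ M⁻¹.trace := by
  rw [dvs_trace_inv hM]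
  exact Finset.sum_nonneg fun i _ => (inv_nonneg).mpr (hM.eigenvalues_pos i).le

end Spec

/-! ### Sherman–Morrison step -/

section SM

variable {n : ℕ}

lemma dvs_sm {M : Matrix (Fin n) (Fin n) ℝ} (hM : M.PosDef) (a : Fin n → ℝ)
    (hM' : (M - vecMulVec a a).PosDef) :
    a ⬝ᵥ (M⁻¹ *ᵥ a) < 1 ∧ 0 ≤ a ⬝ᵥ (M⁻¹ *ᵥ a) ∧
    (M - vecMulVec a a)⁻¹.trace
      = M⁻¹.trace + (1 - a ⬝ᵥ (M⁻¹ *ᵥ a))⁻¹ * ((M⁻¹ *ᵥ a) ⬝ᵥ (M⁻¹ *ᵥ a)) := by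
  set N : Matrix (Fin n) (Fin n) ℝ := M⁻¹ with hNdef
  have hN : N.PosDef := hM.inv
  have hNsymm : Nᵀ = N := by
    have h : Nᴴ = N := hN.1
    rwa [Matrix.conjTranspose_eq_transpose_of_trivial] at h
  have hMN : M * N = 1 := Matrix.mul_nonsing_inv M hM.det_pos.ne'.isUnit
  set t : ℝ := a ⬝ᵥ (N *ᵥ a) with htdef
  set w : Fin n → ℝ := N *ᵥ a with hwdef
  have hMw : M *ᵥ w = a := by
    rw [hwdef, Matrix.mulVec_mulVec, hMN, Matrix.one_mulVec]
  have ht0 : 0 ≤ t := by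
    have := hN.posSemidef.dotProduct_mulVec_nonneg a
    rwa [star_trivial] at this
  have haw : a ⬝ᵥ w = t := rfl
  have hwa : w ⬝ᵥ a = t := (dotProduct_comm w a).trans haw
  have ht1 : t < 1 := by
    by_cases hw : w = 0
    · have ha : a = 0 := by rw [← hMw, hw, Matrix.mulVec_zero]
      have : t = 0 := by simp [htdef, ha]
      rw [this]; norm_num
    · have hpos := hM'.dotProduct_mulVec_pos hw
      rw [star_trivial, Matrix.sub_mulVec, dotProduct_sub, hMw, hwa,
        dvs_vecMulVec_mulVec, dotProduct_smul, hwa, smul_eq_mul] at hpos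
      nlinarith [hpos, ht0]
  have hne : (1 : ℝ) - t ≠ 0 := by linarith
  set c : ℝ := (1 - t)⁻¹ with hcdef
  have havN : a ᵥ* N = w := by
    rw [← hNsymm, Matrix.vecMul_transpose]
  have hinv : (M - vecMulVec a a)⁻¹ = N + c • vecMulVec w w := by
    apply Matrix.inv_eq_right_inv
    rw [Matrix.sub_mul, Matrix.mul_add, Matrix.mul_add, hMN,
      Matrix.mul_smul, dvs_mul_vecMulVec, hMw,
      dvs_vecMulVec_mul, havN,
      Matrix.mul_smul, dvs_vecMulVec_mul_vecMulVec, haw]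
    have : (1 : Matrix (Fin n) (Fin n) ℝ) + c • vecMulVec a w -
        (vecMulVec a w + c • t • vecMulVec a w)
        = 1 + (c - 1 - c * t) • vecMulVec a w := by
      rw [smul_smul, sub_smul, sub_smul, one_smul]
      abel
    rw [this]
    have hz : c - 1 - c * t = 0 := by
      rw [hcdef]; linear_combination inv_mul_cancel₀ hne
    rw [hz, zero_smul, add_zero]
  refine ⟨ht1, ht0, ?_⟩
  rw [hinv, Matrix.trace_add, Matrix.trace_smul, dvs_trace_vecMulVec, smul_eq_mul]

end SM

/-! ### Summation identities and the one-column-removal step -/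

section Step

variable {n m : ℕ} (A : Matrix (Fin n) (Fin m) ℝ)

lemma dvs_sum_dot (N : Matrix (Fin n) (Fin n) ℝ) (S : Finset (Fin m)) :
    ∑ j ∈ S, ((fun i => A i j) ⬝ᵥ (N *ᵥ (fun i => A i j))) = (N * dvsGram A S).trace := by
  rw [dvsGram_eq_sum, Finset.mul_sum, Matrix.trace_sum]
  refine Finset.sum_congr rfl fun j _ => ?_
  rw [dvs_mul_vecMulVec, dvs_trace_vecMulVec]
  exact dotProduct_comm _ _

lemma dvs_step (hrank : ∀ S : Finset (Fin m), n ≤ S.card → (dvsCols A S).rank = n)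
    (S : Finset (Fin m)) (hS : n + 1 ≤ S.card) :
    ∃ j ∈ S, ((dvsGram A (S.erase j))⁻¹).trace
      ≤ (((S.card : ℝ) - n + 1) / ((S.card : ℝ) - n)) * ((dvsGram A S)⁻¹).trace := by
  have hMpd : (dvsGram A S).PosDef := dvsGram_posDef A hrank S (le_trans (Nat.le_succ n) hS)
  set M : Matrix (Fin n) (Fin n) ℝ := dvsGram A S with hMdef
  set N : Matrix (Fin n) (Fin n) ℝ := M⁻¹ with hNdef
  have hN : N.PosDef := hMpd.inv
  have hNsymm : Nᵀ = N := by
    have h : Nᴴ = N := hN.1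
    rwa [Matrix.conjTranspose_eq_transpose_of_trivial] at h
  have hNM : N * M = 1 := Matrix.nonsing_inv_mul M hMpd.det_pos.ne'.isUnit
  set a : Fin m → Fin n → ℝ := fun j i => A i j with hadef
  set t : Fin m → ℝ := fun j => a j ⬝ᵥ (N *ᵥ a j) with htdef
  set q : Fin m → ℝ := fun j => (N *ᵥ a j) ⬝ᵥ (N *ᵥ a j) with hqdef
  -- Gram matrix of `S.erase j`
  have hGe : ∀ j ∈ S, dvsGram A (S.erase j) = M - vecMulVec (a j) (a j) := by
    intro j hj
    rw [hMdef, dvsGram_eq_sum, dvsGram_eq_sum, Finset.sum_erase_eq_sub hj]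
  have hM' : ∀ j ∈ S, (M - vecMulVec (a j) (a j)).PosDef := by
    intro j hj
    rw [← hGe j hj]
    apply dvsGram_posDef A hrank
    have := Finset.card_erase_of_mem hj
    omega
  have hsm := fun j (hj : j ∈ S) => dvs_sm hMpd (a j) (hM' j hj)
  -- summation identities
  have hsum_t : ∑ j ∈ S, t j = (n : ℝ) := by
    rw [htdef]
    have := dvs_sum_dot A N S
    rw [← hMdef, hNM, Matrix.trace_one] at this
    simpa using this
  have hq_eq : ∀ j, q j = a j ⬝ᵥ ((N * N) *ᵥ a j) := by
    intro j
    rw [hqdef]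
    show (N *ᵥ a j) ⬝ᵥ (N *ᵥ a j) = _
    rw [Matrix.dotProduct_mulVec, ← hNsymm, Matrix.vecMul_transpose, Matrix.mulVec_mulVec,
      hNsymm, dotProduct_comm]
  have hMN : M * N = 1 := Matrix.mul_nonsing_inv M hMpd.det_pos.ne'.isUnit
  have hsum_q : ∑ j ∈ S, q j = N.trace := by
    have h1 : ∑ j ∈ S, q j = ((N * N) * M).trace := by
      rw [← dvs_sum_dot A (N * N) S]
      exact Finset.sum_congr rfl fun j _ => hq_eq j
    rw [h1, Matrix.trace_mul_comm, ← Matrix.mul_assoc, hMN, Matrix.one_mul]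
  have hScard : (0:ℝ) < (S.card : ℝ) - n := by
    have : (n:ℝ) + 1 ≤ (S.card : ℝ) := by exact_mod_cast hS
    linarith
  have hSne : S.Nonempty := Finset.card_pos.mp (by omega)
  have hd_pos : ∀ j ∈ S, 0 < 1 - t j := fun j hj => by
    have := (hsm j hj).1; linarith
  have hq_nonneg : ∀ j, 0 ≤ q j := fun j =>
    Finset.sum_nonneg fun i _ => mul_self_nonneg _
  have hsum_d : ∑ j ∈ S, (1 - t j) = (S.card : ℝ) - n := by
    rw [Finset.sum_sub_distrib, hsum_t, Finset.sum_const, nsmul_eq_mul, mul_one]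
  -- choose a good column by averaging
  have hexists : ∃ j ∈ S, q j * ((S.card : ℝ) - n) ≤ N.trace * (1 - t j) := by
    by_contra hcon
    push_neg at hcon
    have hlt : ∑ j ∈ S, N.trace * (1 - t j) < ∑ j ∈ S, q j * ((S.card : ℝ) - n) :=
      Finset.sum_lt_sum_of_nonempty hSne fun j hj => hcon j hj
    rw [← Finset.mul_sum, hsum_d, ← Finset.sum_mul, hsum_q] at hlt
    rw [mul_comm] at hlt
    exact lt_irrefl _ hlt
  obtain ⟨j, hj, hkey⟩ := hexists
  refine ⟨j, hj, ?_⟩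
  rw [hGe j hj]
  rw [(hsm j hj).2.2]
  have hdj : 0 < 1 - t j := hd_pos j hj
  have htrace_nonneg : 0 ≤ N.trace := dvs_trace_inv_nonneg hMpd
  have hstep : (1 - t j)⁻¹ * q j ≤ N.trace / ((S.card : ℝ) - n) := by
    rw [inv_mul_eq_div, div_le_div_iff₀ hdj hScard]
    linarith [hkey]
  have : N.trace + (1 - t j)⁻¹ * q j ≤ N.trace + N.trace / ((S.card : ℝ) - n) := by
    linarith
  refine le_trans this (le_of_eq ?_)
  field_simp

end Step

/-! ### Iterated descent -/

section Descent

variable {n m : ℕ} (A : Matrix (Fin n) (Fin m) ℝ)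

lemma dvs_descent (hrank : ∀ S : Finset (Fin m), n ≤ S.card → (dvsCols A S).rank = n)
    (k : ℕ) (hnk : n ≤ k) :
    ∀ d : ℕ, ∀ S : Finset (Fin m), S.card = k + d →
      ∃ T : Finset (Fin m), T ⊆ S ∧ T.card = k ∧
        ((dvsGram A T)⁻¹).trace
          ≤ (((k : ℝ) + d - n + 1) / ((k : ℝ) - n + 1)) * ((dvsGram A S)⁻¹).trace := by
  have hkpos : (0:ℝ) < (k : ℝ) - n + 1 := by
    have : (n:ℝ) ≤ (k:ℝ) := by exact_mod_cast hnk
    linarith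
  intro d
  induction d with
  | zero =>
    intro S hs
    refine ⟨S, Finset.Subset.refl S, by simpa using hs, ?_⟩
    have hone : ((k : ℝ) + ((0:ℕ):ℝ) - n + 1) / ((k : ℝ) - n + 1) = 1 := by
      rw [div_eq_one_iff_eq hkpos.ne']
      push_cast
      ring
    rw [hone, one_mul]
  | succ d ih =>
    intro S hs
    have hcard : n + 1 ≤ S.card := by omega
    obtain ⟨j, hj, hstep⟩ := dvs_step A hrank S hcard
    have herase : (S.erase j).card = k + d := by
      rw [Finset.card_erase_of_mem hj]; omega
    obtain ⟨T, hTsub, hTcard, hT⟩ := ih (S.erase j) herase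
    refine ⟨T, hTsub.trans (Finset.erase_subset j S), hTcard, ?_⟩
    have hnk' : (n:ℝ) ≤ (k:ℝ) := by exact_mod_cast hnk
    have hdnn : (0:ℝ) ≤ (d:ℝ) := Nat.cast_nonneg d
    have hC1 : (0:ℝ) ≤ ((k : ℝ) + d - n + 1) / ((k : ℝ) - n + 1) := by
      apply div_nonneg _ hkpos.le
      linarith
    have hchain := le_trans hT (mul_le_mul_of_nonneg_left hstep hC1)
    refine le_trans hchain (le_of_eq ?_)
    rw [hs]
    have hz1 : ((k:ℝ) - n + 1) ≠ 0 := hkpos.ne'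
    have hz2 : ((k:ℝ) + d - n + 1) ≠ 0 := by linarith
    have hz3 : (((k + (d+1) : ℕ) : ℝ) - n) ≠ 0 := by push_cast; linarith
    push_cast at hz3 ⊢
    field_simp
    ring

end Descent

/-! ### Main theorem -/

/-- **Deterministic column subset selection (derandomized DVS).**  If every `n`-or-more
column submatrix of `A` has full row rank `n` and `n ≤ k ≤ m`, then there is a subset
`S` of `k` columns with
`tr((A_S A_Sᵀ)⁻¹) ≤ ((m-n+1)/(k-n+1)) tr((A Aᵀ)⁻¹)` and
`λ_min(A_S A_Sᵀ) ≥ ((k-n+1)/(n(m-n+1))) λ_min(A Aᵀ)`;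
equivalently `‖A_S^†‖_F² ≤ ((m-n+1)/(k-n+1)) ‖A^†‖_F²` and
`‖A_S^†‖_2² ≤ (n(m-n+1)/(k-n+1)) ‖A^†‖_2²`. -/
theorem dvs_derandomized_bounds {n m : ℕ} (A : Matrix (Fin n) (Fin m) ℝ)
    (hrank : ∀ S : Finset (Fin m), n ≤ S.card → (dvsCols A S).rank = n)
    (k : ℕ) (hnk : n ≤ k) (hkm : k ≤ m) :
    ∃ S : Finset (Fin m), S.card = k ∧
      ((dvsGram A S)⁻¹).trace
          ≤ (((m : ℝ) - n + 1) / ((k : ℝ) - n + 1)) * ((dvsGram A Finset.univ)⁻¹).trace ∧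
      dvsLamMin A S
          ≥ (((k : ℝ) - n + 1) / ((n : ℝ) * ((m : ℝ) - n + 1))) * dvsLamMin A Finset.univ := by
  rcases Nat.eq_zero_or_pos n with hn0 | hnpos
  · -- degenerate case `n = 0`
    subst hn0
    obtain ⟨S, _, hScard⟩ := Finset.exists_subset_card_eq
      (show k ≤ (Finset.univ : Finset (Fin m)).card by simpa using hkm)
    refine ⟨S, hScard, ?_, ?_⟩
    · have h0 : ∀ T : Finset (Fin m), ((dvsGram A T)⁻¹).trace = 0 := by
        intro T
        simp [Matrix.trace]
      rw [h0, h0, mul_zero]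
    · have h0 : ∀ T : Finset (Fin m), dvsLamMin A T = 0 := by
        intro T
        unfold dvsLamMin
        exact Real.iInf_of_isEmpty _
      rw [h0, h0, mul_zero]
  · -- main case `n ≥ 1`
    have : Nonempty (Fin n) := ⟨⟨0, hnpos⟩⟩
    have hmcard : (Finset.univ : Finset (Fin m)).card = k + (m - k) := by
      simp only [Finset.card_univ, Fintype.card_fin]
      omega
    obtain ⟨T, _, hTcard, hTtrace⟩ := dvs_descent A hrank k hnk (m - k) Finset.univ hmcard
    have hcoeff : ((k : ℝ) + (m - k : ℕ) - n + 1) = ((m : ℝ) - n + 1) := by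
      have : ((m - k : ℕ) : ℝ) = (m : ℝ) - (k : ℝ) := by
        push_cast [Nat.cast_sub hkm]; ring
      rw [this]; ring
    rw [hcoeff] at hTtrace
    refine ⟨T, hTcard, hTtrace, ?_⟩
    -- positive definiteness
    have hTpd : (dvsGram A T).PosDef := dvsGram_posDef A hrank T (by omega)
    have hUpd : (dvsGram A Finset.univ).PosDef := dvsGram_posDef A hrank Finset.univ
      (by simpa using hkm.trans' hnk)
    -- eigenvalue functions
    set eT : Fin n → ℝ := (dvsGram_isHermitian A T).eigenvalues with heT
    set eU : Fin n → ℝ := (dvsGram_isHermitian A Finset.univ).eigenvalues with heU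
    have heT_pos : ∀ i, 0 < eT i := fun i => hTpd.eigenvalues_pos i
    have heU_pos : ∀ i, 0 < eU i := fun i => hUpd.eigenvalues_pos i
    obtain ⟨iT, hiT⟩ := Finite.exists_min eT
    obtain ⟨iU, hiU⟩ := Finite.exists_min eU
    have hlamT : dvsLamMin A T = eT iT := by
      unfold dvsLamMin
      exact le_antisymm (ciInf_le (Finite.bddBelow_range _) iT) (le_ciInf hiT)
    have hlamU : dvsLamMin A Finset.univ = eU iU := by
      unfold dvsLamMin
      exact le_antisymm (ciInf_le (Finite.bddBelow_range _) iU) (le_ciInf hiU)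
    -- trace bounds
    have htrT_ge : (eT iT)⁻¹ ≤ ((dvsGram A T)⁻¹).trace := by
      rw [dvs_trace_inv hTpd]
      exact Finset.single_le_sum (fun i _ => (inv_nonneg).mpr (heT_pos i).le)
        (Finset.mem_univ iT)
    have htrU_le : ((dvsGram A Finset.univ)⁻¹).trace ≤ (n : ℝ) * (eU iU)⁻¹ := by
      rw [dvs_trace_inv hUpd]
      calc ∑ i, (eU i)⁻¹ ≤ ∑ _i : Fin n, (eU iU)⁻¹ := by
            refine Finset.sum_le_sum fun i _ => ?_
            exact inv_anti₀ (heU_pos iU) (hiU i)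
        _ = (n : ℝ) * (eU iU)⁻¹ := by
            rw [Finset.sum_const, nsmul_eq_mul]
            simp
    -- combine
    have hn1 : (0:ℝ) < (n:ℝ) := by exact_mod_cast hnpos
    have hkn1 : (0:ℝ) < (k:ℝ) - n + 1 := by
      have : (n:ℝ) ≤ (k:ℝ) := by exact_mod_cast hnk
      linarith
    have hmn1 : (0:ℝ) < (m:ℝ) - n + 1 := by
      have : (n:ℝ) ≤ (m:ℝ) := by exact_mod_cast hnk.trans hkm
      linarith
    have hcoefpos : (0:ℝ) < ((m : ℝ) - n + 1) / ((k : ℝ) - n + 1) := div_pos hmn1 hkn1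
    have hchain : (eT iT)⁻¹
        ≤ (((m : ℝ) - n + 1) / ((k : ℝ) - n + 1)) * ((n : ℝ) * (eU iU)⁻¹) := by
      refine le_trans htrT_ge (le_trans hTtrace ?_)
      exact mul_le_mul_of_nonneg_left htrU_le hcoefpos.le
    have hXpos : (0:ℝ) < (((m : ℝ) - n + 1) / ((k : ℝ) - n + 1)) * ((n : ℝ) * (eU iU)⁻¹) := by
      have := heU_pos iU
      positivity
    have hfin : ((((m : ℝ) - n + 1) / ((k : ℝ) - n + 1)) * ((n : ℝ) * (eU iU)⁻¹))⁻¹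
        ≤ eT iT := by
      have h := inv_anti₀ (inv_pos.mpr (heT_pos iT)) hchain
      rwa [inv_inv] at h
    rw [ge_iff_le, hlamT, hlamU]
    refine le_trans (le_of_eq ?_) hfin
    have hU := (heU_pos iU).ne'
    field_simp
end

section
/- Let A be a real n×m matrix with full row rank n, and let k be an integer with n ≤ k ≤ m. Then the complement polynomial p_c(z) = ∑_{S ⊆ {1,…,m}, |S| = k} det(A_S A_Sᵀ) ∏_{i ∉ S} z_i is real stable; in particular, for every z ∈ ℂ^m with Im(z_i) > 0 for all i = 1,…,m, p_c(z) ≠ 0. -/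
open Matrix BigOperators

section aux

open Polynomial Finset

variable {R : Type*} [CommRing R]

lemma cb_fiber {n m : ℕ} (A : Matrix (Fin n) (Fin m) R) (v : Fin m → R)
    (S : Finset (Fin m)) (hc : S.card = n) :
    ∑ φ ∈ Finset.univ.filter
        (fun φ : Fin n → Fin m => Function.Injective φ ∧ Finset.image φ Finset.univ = S),
      (∏ i, (v (φ i) * A i (φ i))) *
        (Matrix.of fun i j : Fin n => A j (φ i)).det
      = (Matrix.of fun i j : Fin n => ∑ t ∈ S, A i t * A j t).det * ∏ t ∈ S, v t := by
  classical
  set e : Fin n → Fin m := fun i => S.orderEmbOfFin hc i with he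
  have einj : Function.Injective e := (S.orderEmbOfFin hc).injective
  have erange : ∀ x, x ∈ S ↔ ∃ i, e i = x := by
    intro x
    constructor
    · intro hx
      have hx' : x ∈ Set.range (S.orderEmbOfFin hc) := by
        rw [S.range_orderEmbOfFin hc]; exact Finset.mem_coe.mpr hx
      obtain ⟨i, hi⟩ := hx'
      exact ⟨i, hi⟩
    · rintro ⟨i, rfl⟩; exact S.orderEmbOfFin_mem hc i
  have eim : Finset.image e Finset.univ = S := by
    ext x
    simp only [Finset.mem_image, Finset.mem_univ, true_and]
    rw [erange x]
  have step1 : ∑ φ ∈ Finset.univ.filter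
        (fun φ : Fin n → Fin m => Function.Injective φ ∧ Finset.image φ Finset.univ = S),
      (∏ i, (v (φ i) * A i (φ i))) * (Matrix.of fun i j : Fin n => A j (φ i)).det
      = ∑ σ : Equiv.Perm (Fin n),
        (∏ i, (v (e (σ i)) * A i (e (σ i)))) *
          (Matrix.of fun i j : Fin n => A j (e (σ i))).det := by
    refine (Finset.sum_nbij (fun σ : Equiv.Perm (Fin n) => e ∘ σ) ?_ ?_ ?_ ?_).symm
    · intro σ _
      refine Finset.mem_filter.mpr ⟨Finset.mem_univ _, einj.comp σ.injective, ?_⟩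
      rw [← eim]
      ext x
      simp only [Finset.mem_image, Finset.mem_univ, true_and, Function.comp_apply]
      constructor
      · rintro ⟨i, rfl⟩; exact ⟨σ i, rfl⟩
      · rintro ⟨i, rfl⟩; exact ⟨σ.symm i, by simp⟩
    · intro σ₁ _ σ₂ _ h
      exact Equiv.coe_fn_injective (funext fun i => einj (congrFun h i))
    · intro φ hφ
      obtain ⟨-, hinj, him⟩ := Finset.mem_filter.mp (Finset.mem_coe.mp hφ)
      have hmem : ∀ i, φ i ∈ S := fun i => him ▸ Finset.mem_image_of_mem φ (Finset.mem_univ i)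
      have hsurj : ∀ i, ∃ j, e j = φ i := fun i => (erange (φ i)).mp (hmem i)
      choose ψ hψ using hsurj
      have ψinj : Function.Injective ψ := by
        intro a b hab
        apply hinj
        rw [← hψ a, ← hψ b, hab]
      have ψbij : Function.Bijective ψ := (Finite.injective_iff_bijective).mp ψinj
      refine ⟨Equiv.ofBijective ψ ψbij, Finset.mem_coe.mpr (Finset.mem_univ _), ?_⟩
      funext i
      simpa using hψ i
    · intro σ _
      rfl
  rw [step1]
  have eprod : ∀ f : Fin m → R, ∏ t ∈ S, f t = ∏ i, f (e i) := by
    intro f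
    rw [← eim, Finset.prod_image (fun a _ b _ h => einj h)]
  have esum : ∀ f : Fin m → R, ∑ t ∈ S, f t = ∑ i, f (e i) := by
    intro f
    rw [← eim, Finset.sum_image (fun a _ b _ h => einj h)]
  -- det of row-permuted matrix
  have hNdet : ∀ σ : Equiv.Perm (Fin n),
      (Matrix.of fun i j : Fin n => A j (e (σ i))).det
        = (Equiv.Perm.sign σ : ℤ) * (Matrix.of fun i j : Fin n => A j (e i)).det := by
    intro σ
    have h := Matrix.det_permute σ (Matrix.of fun i j : Fin n => A j (e i))
    rw [← h]
    rfl
  set Ne : Matrix (Fin n) (Fin n) R := Matrix.of fun i j : Fin n => A j (e i) with hNe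
  have hterm : ∀ σ : Equiv.Perm (Fin n),
      (∏ i, (v (e (σ i)) * A i (e (σ i)))) * (Matrix.of fun i j : Fin n => A j (e (σ i))).det
      = (∏ i, v (e i)) * (((Equiv.Perm.sign σ : ℤ) : R) * ∏ i, Ne (σ i) i) * Ne.det := by
    intro σ
    rw [hNdet σ, Finset.prod_mul_distrib, Equiv.prod_comp σ (fun i => v (e i))]
    have hh : ∀ i, Ne (σ i) i = A i (e (σ i)) := fun i => rfl
    simp only [hh]
    ring
  calc ∑ σ : Equiv.Perm (Fin n),
        (∏ i, (v (e (σ i)) * A i (e (σ i)))) *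
          (Matrix.of fun i j : Fin n => A j (e (σ i))).det
      = ∑ σ : Equiv.Perm (Fin n),
          (∏ i, v (e i)) * (((Equiv.Perm.sign σ : ℤ) : R) * ∏ i, Ne (σ i) i) * Ne.det :=
        Finset.sum_congr rfl (fun σ _ => hterm σ)
    _ = (∏ i, v (e i)) * (∑ σ : Equiv.Perm (Fin n),
          ((Equiv.Perm.sign σ : ℤ) : R) * ∏ i, Ne (σ i) i) * Ne.det := by
        rw [← Finset.sum_mul, ← Finset.mul_sum]
    _ = (∏ i, v (e i)) * Ne.det * Ne.det := by
        rw [← Matrix.det_apply' Ne]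
    _ = (Matrix.of fun i j : Fin n => ∑ t ∈ S, A i t * A j t).det * ∏ t ∈ S, v t := by
        have hg : (Matrix.of fun i j : Fin n => ∑ t ∈ S, A i t * A j t) = Neᵀ * Ne := by
          ext i j
          simp only [Matrix.of_apply]
          rw [esum (fun t => A i t * A j t)]
          simp [hNe, Matrix.mul_apply, Matrix.transpose_apply]
        rw [hg, Matrix.det_mul, Matrix.det_transpose, eprod (fun t => v t)]
        ring

lemma cb_master {n m : ℕ} (A : Matrix (Fin n) (Fin m) R) (v : Fin m → R) :
    (Matrix.of fun i j : Fin n => ∑ t, v t * (A i t * A j t)).det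
      = ∑ S ∈ Finset.univ.powersetCard n,
          (Matrix.of fun i j : Fin n => ∑ t ∈ S, A i t * A j t).det * ∏ t ∈ S, v t := by
  classical
  have h1 : (Matrix.of fun i j : Fin n => ∑ t, v t * (A i t * A j t)).det
      = ∑ φ : Fin n → Fin m,
          Matrix.detRowAlternating
            (fun i => (v (φ i) * A i (φ i)) • (fun j : Fin n => A j (φ i))) := by
    have hrows : (Matrix.of fun i j : Fin n => ∑ t, v t * (A i t * A j t))
        = fun i => ∑ t : Fin m, (v t * A i t) • (fun j : Fin n => A j t) := by
      funext i j
      simp [Finset.sum_apply, smul_eq_mul, mul_assoc]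
    show Matrix.detRowAlternating _ = _
    rw [hrows]
    exact Matrix.detRowAlternating.toMultilinearMap.map_sum
      (fun i t => (v t * A i t) • (fun j : Fin n => A j t))
  have h2 : (Matrix.of fun i j : Fin n => ∑ t, v t * (A i t * A j t)).det
      = ∑ φ : Fin n → Fin m,
          (∏ i, (v (φ i) * A i (φ i))) * (Matrix.of fun i j : Fin n => A j (φ i)).det := by
    rw [h1]
    refine Finset.sum_congr rfl (fun φ _ => ?_)
    show Matrix.detRowAlternating.toMultilinearMap _ = _
    rw [MultilinearMap.map_smul_univ Matrix.detRowAlternating.toMultilinearMap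
      (fun i => v (φ i) * A i (φ i)) (fun i => (fun j : Fin n => A j (φ i)))]
    simp only [smul_eq_mul]
    rfl
  rw [h2]
  have hzero : ∀ φ : Fin n → Fin m, ¬Function.Injective φ →
      (Matrix.of fun i j : Fin n => A j (φ i)).det = 0 := by
    intro φ hφ
    obtain ⟨a, b, hab, hne⟩ := Function.not_injective_iff.mp hφ
    exact Matrix.det_zero_of_row_eq hne (funext fun l => by simp [hab])
  rw [← Finset.sum_filter_add_sum_filter_not Finset.univ
    (fun φ : Fin n → Fin m => Function.Injective φ)]
  have hz2 : ∑ φ ∈ Finset.univ.filter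
      (fun φ : Fin n → Fin m => ¬Function.Injective φ),
      (∏ i, (v (φ i) * A i (φ i))) * (Matrix.of fun i j : Fin n => A j (φ i)).det = 0 := by
    refine Finset.sum_eq_zero (fun φ hφ => ?_)
    rw [hzero φ (Finset.mem_filter.mp hφ).2, mul_zero]
  rw [hz2, add_zero]
  have hpart : Finset.univ.filter (fun φ : Fin n → Fin m => Function.Injective φ)
      = (Finset.univ.powersetCard n).biUnion
          (fun S => Finset.univ.filter
            (fun φ : Fin n → Fin m => Function.Injective φ ∧ Finset.image φ Finset.univ = S)) := by
    ext φ
    simp only [Finset.mem_filter, Finset.mem_univ, true_and, Finset.mem_biUnion,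
      Finset.mem_powersetCard_univ]
    constructor
    · intro h
      exact ⟨Finset.image φ Finset.univ, by
        rw [Finset.card_image_of_injective _ h, Finset.card_univ, Fintype.card_fin], h, rfl⟩
    · rintro ⟨S, -, h, -⟩
      exact h
  rw [hpart, Finset.sum_biUnion]
  · refine Finset.sum_congr rfl (fun S hS => ?_)
    exact cb_fiber A v S (Finset.mem_powersetCard_univ.mp hS)
  · intro S hS T hT hST
    refine Finset.disjoint_left.mpr (fun φ h1 h2 => hST ?_)
    have e1 := (Finset.mem_filter.mp h1).2.2
    have e2 := (Finset.mem_filter.mp h2).2.2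
    rw [← e1, ← e2]

private lemma multiset_sum_im_nonpos (s : Multiset ℂ) (h : ∀ x ∈ s, x.im ≤ 0) :
    s.sum.im ≤ 0 := by
  induction s using Multiset.induction_on with
  | empty => simp
  | cons a t ih =>
      rw [Multiset.sum_cons, Complex.add_im]
      have := h a (Multiset.mem_cons_self a t)
      have ht := ih (fun x hx => h x (Multiset.mem_cons_of_mem hx))
      linarith

private lemma multiset_sum_im_neg (s : Multiset ℂ) (h0 : s ≠ 0) (h : ∀ x ∈ s, x.im < 0) :
    s.sum.im < 0 := by
  obtain ⟨a, ha⟩ := Multiset.exists_mem_of_ne_zero h0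
  rw [← Multiset.cons_erase ha, Multiset.sum_cons, Complex.add_im]
  have h1 := h a ha
  have h2 := multiset_sum_im_nonpos (s.erase a)
    (fun x hx => le_of_lt (h x (Multiset.mem_of_mem_erase hx)))
  linarith

private lemma deriv_msprod (s : Multiset ℂ) :
    derivative (s.map (fun r => X - C r)).prod
      = (s.map (fun r => ((s.erase r).map (fun u => X - C u)).prod)).sum := by
  classical
  induction s using Multiset.induction_on with
  | empty => simp
  | cons a s ih =>
      rw [Multiset.map_cons, Multiset.prod_cons, derivative_mul, derivative_sub,
        derivative_X, derivative_C, sub_zero, one_mul, ih]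
      rw [Multiset.map_cons, Multiset.sum_cons, Multiset.erase_cons_head]
      congr 1
      have hmap : (s.map (fun r => (((a ::ₘ s).erase r).map (fun u => X - C u)).prod))
          = s.map (fun r => (X - C a) * ((s.erase r).map (fun u => X - C u)).prod) := by
        refine Multiset.map_congr rfl (fun r hr => ?_)
        have herase : (a ::ₘ s).erase r = a ::ₘ s.erase r := by
          by_cases hra : r = a
          · subst hra
            rw [Multiset.erase_cons_head, Multiset.cons_erase hr]
          · exact Multiset.erase_cons_tail s (fun h => hra h.symm)
        rw [herase, Multiset.map_cons, Multiset.prod_cons]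
      rw [hmap, Multiset.sum_map_mul_left]

private lemma gl_step (q : Polynomial ℂ) (hdeg : 1 ≤ q.natDegree)
    (hq : ∀ t : ℂ, 0 ≤ t.im → q.eval t ≠ 0) :
    ∀ t : ℂ, 0 ≤ t.im → (derivative q).eval t ≠ 0 := by
  classical
  intro t ht
  have hq0 : q ≠ 0 := by
    intro h
    rw [h, natDegree_zero] at hdeg
    omega
  have hsplits := IsAlgClosed.splits q
  have hsplit : q = C q.leadingCoeff * (q.roots.map fun r => X - C r).prod :=
    hsplits.eq_prod_roots
  have hlc : q.leadingCoeff ≠ 0 := leadingCoeff_ne_zero.mpr hq0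
  have hcard : q.roots.card = q.natDegree := (splits_iff_card_roots).mp hsplits
  have hroots_im : ∀ r ∈ q.roots, r.im < 0 := by
    intro r hr
    by_contra h
    exact hq r (le_of_not_gt h) ((mem_roots hq0).mp hr)
  have hne : ∀ r ∈ q.roots, t - r ≠ 0 := by
    intro r hr h0
    have h1 := hroots_im r hr
    have : t = r := sub_eq_zero.mp h0
    rw [this] at ht
    linarith
  have hE : ((q.roots.map fun r => X - C r).prod).eval t ≠ 0 := by
    rw [eval_multiset_prod]
    refine Multiset.prod_ne_zero ?_
    intro h0
    rw [Multiset.map_map] at h0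
    obtain ⟨r, hr, hr0⟩ := Multiset.mem_map.mp h0
    exact hne r hr (by simpa using hr0)
  have hd : derivative q
      = C q.leadingCoeff * (q.roots.map
          (fun r => ((q.roots.erase r).map (fun u => X - C u)).prod)).sum := by
    conv_lhs => rw [hsplit]
    rw [derivative_C_mul, deriv_msprod]
  rw [hd, eval_mul, eval_C]
  set E : ℂ := ((q.roots.map fun r => X - C r).prod).eval t with hEdef
  have hsum : ((q.roots.map
        (fun r => ((q.roots.erase r).map (fun u => X - C u)).prod)).sum).eval t
      = ((q.roots.map (fun r => (t - r)⁻¹ * E))).sum := by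
    rw [← coe_evalRingHom, map_multiset_sum, Multiset.map_map]
    refine congrArg Multiset.sum (Multiset.map_congr rfl (fun r hr => ?_))
    have hfac : (q.roots.map fun u => X - C u).prod
        = (X - C r) * ((q.roots.erase r).map (fun u => X - C u)).prod := by
      conv_lhs => rw [← Multiset.cons_erase hr]
      rw [Multiset.map_cons, Multiset.prod_cons]
    have hEr : E = (t - r) * (((q.roots.erase r).map (fun u => X - C u)).prod).eval t := by
      rw [hEdef, hfac, eval_mul]
      simp
    have := hne r hr
    simp only [Function.comp_apply, coe_evalRingHom]
    field_simp [hEr]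
    rw [hEr, mul_comm]
  rw [hsum]
  have hpull : ((q.roots.map (fun r => (t - r)⁻¹ * E))).sum
      = ((q.roots.map (fun r => (t - r)⁻¹))).sum * E := by
    rw [← Multiset.sum_map_mul_right]
  rw [hpull]
  have hroots_ne : q.roots ≠ 0 := by
    intro h0
    rw [h0] at hcard
    simp at hcard
    omega
  have him : ((q.roots.map (fun r => (t - r)⁻¹))).sum.im < 0 := by
    refine multiset_sum_im_neg _ ?_ ?_
    · intro h0
      exact hroots_ne (by simpa using (Multiset.map_eq_zero.mp h0))
    · intro x hx
      obtain ⟨r, hr, rfl⟩ := Multiset.mem_map.mp hx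
      rw [Complex.inv_im]
      have h1 : (t - r).im > 0 := by
        rw [Complex.sub_im]
        have := hroots_im r hr
        linarith
      have h2 : Complex.normSq (t - r) > 0 := by
        refine Complex.normSq_pos.mpr (hne r hr)
      have h3 : -(t - r).im < 0 := by linarith
      exact div_neg_of_neg_of_pos h3 h2
  have hsne : ((q.roots.map (fun r => (t - r)⁻¹))).sum ≠ 0 := by
    intro h0
    rw [h0] at him
    simp at him
  exact mul_ne_zero hlc (mul_ne_zero hsne hE)

private lemma gl_iter (g : Polynomial ℂ) (d : ℕ)
    (hg : ∀ t : ℂ, 0 ≤ t.im → g.eval t ≠ 0) (hc : g.coeff d ≠ 0) :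
    ∀ r, r ≤ d → (∀ t : ℂ, 0 ≤ t.im → (derivative^[r] g).eval t ≠ 0) ∧
      (derivative^[r] g).coeff (d - r) ≠ 0 := by
  intro r
  induction r with
  | zero => intro _; simpa using ⟨hg, hc⟩
  | succ r ih =>
      intro hrd
      obtain ⟨h1, h2⟩ := ih (by omega)
      have hdeg : 1 ≤ (derivative^[r] g).natDegree := by
        have := le_natDegree_of_ne_zero h2
        omega
      constructor
      · intro t ht
        rw [Function.iterate_succ_apply']
        exact gl_step _ hdeg h1 t ht
      · rw [Function.iterate_succ_apply', coeff_derivative]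
        have heq : d - (r + 1) + 1 = d - r := by omega
        rw [heq]
        refine mul_ne_zero h2 ?_
        have h3 : (((d - (r+1)) + 1 : ℕ) : ℂ) ≠ 0 := Nat.cast_ne_zero.mpr (Nat.succ_ne_zero _)
        push_cast at h3
        exact h3

/-- If `g` is nonvanishing on the closed upper half plane and has nonzero `d`-th coefficient,
then all coefficients `g.coeff j` for `j ≤ d` are nonzero. -/
private lemma gl_coeff_ne_zero (g : Polynomial ℂ) (d : ℕ)
    (hg : ∀ t : ℂ, 0 ≤ t.im → g.eval t ≠ 0) (hc : g.coeff d ≠ 0)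
    (j : ℕ) (hj : j ≤ d) : g.coeff j ≠ 0 := by
  have h := (gl_iter g d hg hc j hj).1 0 (by simp)
  rw [← Polynomial.coeff_zero_eq_eval_zero, Polynomial.coeff_iterate_derivative] at h
  intro h0
  rw [zero_add, h0] at h
  simp at h

private lemma det_AAt_ne_zero {n m : ℕ} (A : Matrix (Fin n) (Fin m) ℝ) (hA : A.rank = n) :
    (A * Aᵀ).det ≠ 0 := by
  have hr : (A * Aᵀ).rank = n := by rw [Matrix.rank_self_mul_transpose, hA]
  intro hdet
  obtain ⟨x, hx0, hx⟩ := (Matrix.exists_mulVec_eq_zero_iff).mpr hdet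
  have h1 := LinearMap.finrank_range_add_finrank_ker (A * Aᵀ).mulVecLin
  have h2 : Module.finrank ℝ (Fin n → ℝ) = n := by
    simp [Module.finrank_fintype_fun_eq_card]
  rw [h2] at h1
  have h3 : Module.finrank ℝ (LinearMap.range (A * Aᵀ).mulVecLin) = n := hr
  have h4 : Module.finrank ℝ (LinearMap.ker (A * Aᵀ).mulVecLin) = 0 := by omega
  have h5 : LinearMap.ker (A * Aᵀ).mulVecLin = ⊥ :=
    Submodule.finrank_eq_zero.mp h4
  have h6 : x ∈ LinearMap.ker (A * Aᵀ).mulVecLin := by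
    rw [LinearMap.mem_ker, Matrix.mulVecLin_apply]
    exact hx
  rw [h5, Submodule.mem_bot] at h6
  exact hx0 h6

private lemma det_weighted_gram_ne_zero {n m : ℕ} (A : Matrix (Fin n) (Fin m) ℝ)
    (hA : A.rank = n) (v : Fin m → ℂ) (hv : ∀ i, (v i).im < 0) :
    (Matrix.of fun i j : Fin n => ∑ t, v t * ((A.map (fun r : ℝ => (r : ℂ))) i t *
      (A.map (fun r : ℝ => (r : ℂ))) j t)).det ≠ 0 := by
  classical
  set Ac : Matrix (Fin n) (Fin m) ℂ := A.map (fun r : ℝ => (r : ℂ)) with hAc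
  set M : Matrix (Fin n) (Fin n) ℂ :=
    Matrix.of fun i j : Fin n => ∑ t, v t * (Ac i t * Ac j t) with hM
  intro hdet
  obtain ⟨x, hx0, hx⟩ := (Matrix.exists_mulVec_eq_zero_iff).mpr hdet
  set w : Fin m → ℂ := fun t => ∑ j, Ac j t * x j with hw
  have expand : ∀ i, (M *ᵥ x) i = ∑ t, v t * Ac i t * w t := by
    intro i
    show (∑ j, M i j * x j) = _
    simp only [hM, Matrix.of_apply, Finset.sum_mul]
    rw [Finset.sum_comm]
    refine Finset.sum_congr rfl fun t _ => ?_
    rw [hw]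
    simp only [Finset.mul_sum]
    refine Finset.sum_congr rfl fun j _ => by ring
  have hconjw : ∀ t, (starRingEnd ℂ) (w t) = ∑ i, Ac i t * (starRingEnd ℂ) (x i) := by
    intro t
    rw [hw, map_sum]
    refine Finset.sum_congr rfl fun i _ => ?_
    simp [hAc, Matrix.map_apply, Complex.conj_ofReal]
  have key : (0 : ℂ) = ∑ t, v t * ((Complex.normSq (w t) : ℝ) : ℂ) := by
    have h0 : ∑ i, (starRingEnd ℂ) (x i) * (M *ᵥ x) i = 0 := by
      rw [hx]
      simp
    calc (0 : ℂ) = ∑ i, (starRingEnd ℂ) (x i) * (M *ᵥ x) i := h0.symm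
      _ = ∑ i, ∑ t, (starRingEnd ℂ) (x i) * (v t * Ac i t * w t) := by
          refine Finset.sum_congr rfl fun i _ => ?_
          rw [expand i, Finset.mul_sum]
      _ = ∑ t, ∑ i, (starRingEnd ℂ) (x i) * (v t * Ac i t * w t) := Finset.sum_comm
      _ = ∑ t, v t * (w t * (starRingEnd ℂ) (w t)) := by
          refine Finset.sum_congr rfl fun t _ => ?_
          rw [hconjw t, Finset.mul_sum, Finset.mul_sum]
          refine Finset.sum_congr rfl fun i _ => by ring
      _ = ∑ t, v t * ((Complex.normSq (w t) : ℝ) : ℂ) := by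
          refine Finset.sum_congr rfl fun t _ => ?_
          rw [Complex.mul_conj]
  have him : ∀ t : Fin m, (v t).im * Complex.normSq (w t) ≤ 0 := by
    intro t
    have h1 := (hv t).le
    have h2 : 0 ≤ Complex.normSq (w t) := Complex.normSq_nonneg _
    exact mul_nonpos_of_nonpos_of_nonneg h1 h2
  have hsum0 : ∑ t, (v t).im * Complex.normSq (w t) = 0 := by
    have := congrArg Complex.im key
    rw [Complex.im_sum] at this
    simp only [Complex.mul_im, Complex.ofReal_re, Complex.ofReal_im, mul_zero, add_zero,
      Complex.zero_im] at this
    simpa using this.symm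
  have hwzero : ∀ t, w t = 0 := by
    intro t
    have := (Finset.sum_eq_zero_iff_of_nonpos (fun t _ => him t)).mp hsum0 t (Finset.mem_univ t)
    have hv0 : (v t).im ≠ 0 := ne_of_lt (hv t)
    have : Complex.normSq (w t) = 0 := by
      rcases mul_eq_zero.mp this with h | h
      · exact absurd h hv0
      · exact h
    exact Complex.normSq_eq_zero.mp this
  -- contradiction with full rank
  have hAx : (Ac * Acᵀ) *ᵥ x = 0 := by
    rw [← Matrix.mulVec_mulVec]
    have : Acᵀ *ᵥ x = 0 := by
      funext t
      show (∑ j, Acᵀ t j * x j) = 0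
      simpa [Matrix.transpose_apply] using hwzero t
    rw [this, Matrix.mulVec_zero]
  have hdet2 : (Ac * Acᵀ).det = 0 :=
    Matrix.exists_mulVec_eq_zero_iff.mp ⟨x, hx0, hAx⟩
  have hmap : Ac * Acᵀ = Complex.ofRealHom.mapMatrix (A * Aᵀ) := by
    ext i j
    simp [hAc, Matrix.mul_apply, Matrix.map_apply, Matrix.transpose_apply,
      RingHom.mapMatrix_apply]
  rw [hmap, ← RingHom.map_det] at hdet2
  have : ((A * Aᵀ).det : ℂ) = 0 := hdet2
  exact det_AAt_ne_zero A hA (by exact_mod_cast this)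

end aux

/-- For a full-row-rank real `n × m` matrix `A` and `n ≤ k ≤ m`, the complement
polynomial `p_c(z) = ∑_{|S| = k} det(A_S A_Sᵀ) ∏_{i ∉ S} z_i` is real stable:
it does not vanish whenever all variables have positive imaginary part. -/
theorem dvs_complement_polynomial_real_stable {n m : ℕ} (A : Matrix (Fin n) (Fin m) ℝ)
    (hA : A.rank = n) (k : ℕ) (hnk : n ≤ k) (hkm : k ≤ m)
    (z : Fin m → ℂ) (hz : ∀ i, 0 < (z i).im) :
    ∑ S ∈ Finset.univ.powersetCard k, ((dvsGram A S).det : ℂ) * ∏ i ∈ Sᶜ, z i ≠ 0 := by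
  classical
  set Ac : Matrix (Fin n) (Fin m) ℂ := A.map (fun r : ℝ => (r : ℂ)) with hAc
  -- coercion of Gram determinants
  have hcoe : ∀ S : Finset (Fin m), ((dvsGram A S).det : ℂ)
      = (Matrix.of fun i j : Fin n => ∑ t ∈ S, Ac i t * Ac j t).det := by
    intro S
    have h1 : Complex.ofRealHom.mapMatrix (dvsGram A S)
        = Matrix.of fun i j : Fin n => ∑ t ∈ S, Ac i t * Ac j t := by
      ext i j
      simp [dvsGram, hAc, Matrix.map_apply, RingHom.mapMatrix_apply]
    rw [← h1, ← RingHom.map_det]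
    rfl
  -- the auxiliary one-variable polynomial
  set g : Polynomial ℂ := ∑ T ∈ Finset.univ.powersetCard n,
      Polynomial.C ((dvsGram A T).det : ℂ) * ∏ i ∈ Tᶜ, (Polynomial.X + Polynomial.C (z i))
    with hg
  -- Step II : g does not vanish on the closed upper half plane
  have hstep2 : ∀ t : ℂ, 0 ≤ t.im → g.eval t ≠ 0 := by
    intro t ht
    set w : Fin m → ℂ := fun i => z i + t with hw
    have hwim : ∀ i, 0 < (w i).im := by
      intro i
      rw [hw]
      simp only [Complex.add_im]
      have := hz i
      linarith
    have hwne : ∀ i, w i ≠ 0 := by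
      intro i h0
      have := hwim i
      rw [h0] at this
      simp at this
    set v : Fin m → ℂ := fun i => (w i)⁻¹ with hv
    have hvim : ∀ i, (v i).im < 0 := by
      intro i
      rw [hv]
      simp only [Complex.inv_im]
      have h1 := hwim i
      have h2 : 0 < Complex.normSq (w i) := Complex.normSq_pos.mpr (hwne i)
      have : -(w i).im < 0 := by linarith
      exact div_neg_of_neg_of_pos this h2
    have heval : g.eval t = (∏ i, w i) *
        (Matrix.of fun i j : Fin n => ∑ t, v t * (Ac i t * Ac j t)).det := by
      rw [cb_master Ac v, hg]
      rw [Polynomial.eval_finset_sum]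
      rw [Finset.mul_sum]
      refine Finset.sum_congr rfl fun T hT => ?_
      rw [Polynomial.eval_mul, Polynomial.eval_C, Polynomial.eval_prod]
      simp only [Polynomial.eval_add, Polynomial.eval_X, Polynomial.eval_C]
      rw [hcoe T]
      have hsplit : (∏ i, w i) = (∏ i ∈ Tᶜ, w i) * ∏ i ∈ T, w i :=
        (Finset.prod_compl_mul_prod T w).symm
      have hprodv : ∏ i ∈ T, v i = (∏ i ∈ T, w i)⁻¹ := by
        rw [hv, Finset.prod_inv_distrib]
      have hTne : (∏ i ∈ T, w i) ≠ 0 := Finset.prod_ne_zero_iff.mpr fun i _ => hwne i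
      have hgoal : ∏ i ∈ Tᶜ, (t + z i) = ∏ i ∈ Tᶜ, w i :=
        Finset.prod_congr rfl fun i _ => by rw [hw]; exact add_comm _ _
      rw [hprodv, hsplit, hgoal]
      field_simp
    rw [heval]
    exact mul_ne_zero (Finset.prod_ne_zero_iff.mpr fun i _ => hwne i)
      (det_weighted_gram_ne_zero A hA v hvim)
  -- Step III : leading coefficient
  have hcard_compl : ∀ T : Finset (Fin m), T ∈ Finset.univ.powersetCard n → (Tᶜ.card = m - n) := by
    intro T hT
    rw [Finset.card_compl, Finset.mem_powersetCard_univ.mp hT, Fintype.card_fin]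
  have hstep3 : g.coeff (m - n) ≠ 0 := by
    have hcomp : g.coeff (m - n) = ∑ T ∈ Finset.univ.powersetCard n, ((dvsGram A T).det : ℂ) := by
      rw [hg, Polynomial.finset_sum_coeff]
      refine Finset.sum_congr rfl fun T hT => ?_
      rw [Polynomial.coeff_C_mul]
      have hc := hcard_compl T hT
      have hvieta := Finset.prod_X_add_C_coeff Tᶜ z (k := m - n) (by rw [hc])
      rw [hvieta, hc, Nat.sub_self, Finset.powersetCard_zero]
      simp
    rw [hcomp]
    have hsum : ∑ T ∈ Finset.univ.powersetCard n, ((dvsGram A T).det : ℂ)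
        = ((A * Aᵀ).det : ℂ) := by
      have h1 := cb_master Ac (fun _ => (1 : ℂ))
      simp only [one_mul, Finset.prod_const_one, mul_one] at h1
      have h2 : (Matrix.of fun i j : Fin n => ∑ t, Ac i t * Ac j t)
          = Complex.ofRealHom.mapMatrix (A * Aᵀ) := by
        ext i j
        simp [hAc, Matrix.mul_apply, Matrix.map_apply, RingHom.mapMatrix_apply]
      have h4 : ∑ T ∈ Finset.univ.powersetCard n, ((dvsGram A T).det : ℂ)
          = ∑ T ∈ Finset.univ.powersetCard n,
              (Matrix.of fun i j : Fin n => ∑ t ∈ T, Ac i t * Ac j t).det :=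
        Finset.sum_congr rfl fun T _ => hcoe T
      rw [h4, ← h1, h2, ← RingHom.map_det]
      rfl
    rw [hsum]
    exact_mod_cast det_AAt_ne_zero A hA
  -- Step I : the target is a coefficient of g
  have hstep1 : ∑ S ∈ Finset.univ.powersetCard k, ((dvsGram A S).det : ℂ) * ∏ i ∈ Sᶜ, z i
      = g.coeff (k - n) := by
    -- Cauchy-Binet decomposition of each Gram determinant
    have hCB' : ∀ S : Finset (Fin m), ((dvsGram A S).det : ℂ)
        = ∑ T ∈ Finset.univ.powersetCard n,
            ((dvsGram A T).det : ℂ) * (if T ⊆ S then 1 else 0) := by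
      intro S
      have h1 := cb_master A (fun t => if t ∈ S then (1:ℝ) else 0)
      have h2 : (Matrix.of fun i j : Fin n => ∑ t, (if t ∈ S then (1:ℝ) else 0) * (A i t * A j t))
          = dvsGram A S := by
        ext i j
        simp only [Matrix.of_apply, ite_mul, one_mul, zero_mul, dvsGram]
        rw [Finset.sum_ite_mem, Finset.univ_inter]
      have h3 : ∀ T : Finset (Fin m), (∏ t ∈ T, (if t ∈ S then (1:ℝ) else 0))
          = if T ⊆ S then 1 else 0 := by
        intro T
        by_cases h : T ⊆ S
        · rw [if_pos h]
          exact Finset.prod_eq_one fun t ht => if_pos (h ht)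
        · rw [if_neg h]
          obtain ⟨t, ht, hts⟩ := Finset.not_subset.mp h
          exact Finset.prod_eq_zero ht (if_neg hts)
      rw [h2] at h1
      simp only [h3] at h1
      rw [h1]
      push_cast
      refine Finset.sum_congr rfl fun T _ => ?_
      congr 1
      split <;> simp
    calc ∑ S ∈ Finset.univ.powersetCard k, ((dvsGram A S).det : ℂ) * ∏ i ∈ Sᶜ, z i
        = ∑ S ∈ Finset.univ.powersetCard k, ∑ T ∈ Finset.univ.powersetCard n,
            ((dvsGram A T).det : ℂ) * (if T ⊆ S then (∏ i ∈ Sᶜ, z i) else 0) := by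
          refine Finset.sum_congr rfl fun S _ => ?_
          rw [hCB', Finset.sum_mul]
          refine Finset.sum_congr rfl fun T _ => ?_
          rw [mul_assoc, ite_mul, one_mul, zero_mul]
      _ = ∑ T ∈ Finset.univ.powersetCard n, ((dvsGram A T).det : ℂ) *
            ∑ S ∈ Finset.univ.powersetCard k, (if T ⊆ S then (∏ i ∈ Sᶜ, z i) else 0) := by
          rw [Finset.sum_comm]
          refine Finset.sum_congr rfl fun T _ => ?_
          rw [Finset.mul_sum]
      _ = ∑ T ∈ Finset.univ.powersetCard n, ((dvsGram A T).det : ℂ) *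
            ∑ W ∈ Tᶜ.powersetCard (m - k), ∏ i ∈ W, z i := by
          refine Finset.sum_congr rfl fun T hT => ?_
          congr 1
          rw [← Finset.sum_filter]
          refine Finset.sum_nbij' (fun S => Sᶜ) (fun W => Wᶜ) ?_ ?_ ?_ ?_ ?_
          · intro S hS
            obtain ⟨hS1, hS2⟩ := Finset.mem_filter.mp hS
            refine Finset.mem_powersetCard.mpr ⟨?_, ?_⟩
            · exact Finset.compl_subset_compl.mpr hS2
            · rw [Finset.card_compl, Finset.mem_powersetCard_univ.mp hS1, Fintype.card_fin]
          · intro W hW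
            obtain ⟨hW1, hW2⟩ := Finset.mem_powersetCard.mp hW
            refine Finset.mem_filter.mpr ⟨?_, ?_⟩
            · refine Finset.mem_powersetCard_univ.mpr ?_
              rw [Finset.card_compl, hW2, Fintype.card_fin]
              omega
            · rw [← compl_compl T]
              exact Finset.compl_subset_compl.mpr hW1
          · intro S _; exact compl_compl S
          · intro W _; exact compl_compl W
          · intro S _; rfl
      _ = g.coeff (k - n) := by
          rw [hg, Polynomial.finset_sum_coeff]
          refine Finset.sum_congr rfl fun T hT => ?_
          rw [Polynomial.coeff_C_mul]
          have hc := hcard_compl T hT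
          have hvieta := Finset.prod_X_add_C_coeff Tᶜ z (k := k - n) (by rw [hc]; omega)
          rw [hvieta, hc]
          have : m - n - (k - n) = m - k := by omega
          rw [this]
  rw [hstep1]
  exact gl_coeff_ne_zero g (m - n) hstep2 hstep3 (k - n) (by omega)
end

section
/- Let B be an N×N complex Hermitian matrix and let A_1, …, A_m be N×N complex Hermitian positive semidefinite matrices. Define f(z) = det(B + ∑_{i=1}^m z_i A_i) as a polynomial in z = (z_1,…,z_m). Then either f is identically zero, or f(z) ≠ 0 for every z ∈ ℂ^m with Im(z_i) > 0 for all i = 1,…,m. -/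
open Matrix BigOperators
open scoped ComplexOrder

private lemma aux_sum_mulVec {n k : Type*} [Fintype n] [Fintype k]
    (A : k → Matrix n n ℂ) (v : n → ℂ) :
    (∑ i, A i) *ᵥ v = ∑ i, A i *ᵥ v := by
  ext x
  simp [Matrix.mulVec, dotProduct, Matrix.sum_apply, Finset.sum_apply, Finset.sum_mul]
  rw [Finset.sum_comm]

private lemma aux_dotProduct_sum {n k : Type*} [Fintype n] [Fintype k]
    (A : k → n → ℂ) (v : n → ℂ) :
    v ⬝ᵥ (∑ i, A i) = ∑ i, v ⬝ᵥ A i := by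
  simp [dotProduct, Finset.sum_apply, Finset.mul_sum]
  rw [Finset.sum_comm]

/-- **Borcea–Brändén determinantal stability.**  If `B` is Hermitian and
`A_1, …, A_m` are Hermitian positive semidefinite `N × N` complex matrices, then
`f(z) = det(B + ∑ i, z_i A_i)` is either identically zero or nonvanishing whenever
every `z_i` has positive imaginary part (i.e., `f` is stable). -/
theorem det_hermitian_psd_combination_stable {N m : ℕ}
    (B : Matrix (Fin N) (Fin N) ℂ) (hB : B.IsHermitian)
    (M : Fin m → Matrix (Fin N) (Fin N) ℂ) (hM : ∀ i, (M i).PosSemidef) :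
    (∀ z : Fin m → ℂ, (B + ∑ i, z i • M i).det = 0) ∨
    (∀ z : Fin m → ℂ, (∀ i, 0 < (z i).im) → (B + ∑ i, z i • M i).det ≠ 0) := by
  by_cases h : ∃ z : Fin m → ℂ, (∀ i, 0 < (z i).im) ∧ (B + ∑ i, z i • M i).det = 0
  · left
    obtain ⟨z, hz, hdet⟩ := h
    obtain ⟨v, hv, hvz⟩ := Matrix.exists_mulVec_eq_zero_iff.mpr hdet
    set r : Fin m → ℂ := fun i => star v ⬝ᵥ (M i) *ᵥ v with hr
    have hrpos : ∀ i, 0 ≤ r i := fun i => (hM i).dotProduct_mulVec_nonneg v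
    have hsum : ∀ w : Fin m → ℂ,
        (B + ∑ i, w i • M i) *ᵥ v = B *ᵥ v + ∑ i, w i • ((M i) *ᵥ v) := by
      intro w
      rw [Matrix.add_mulVec, aux_sum_mulVec]
      simp [Matrix.smul_mulVec]
    have hb : star v ⬝ᵥ B *ᵥ v + ∑ i, z i * r i = 0 := by
      have h1 := congrArg (fun w => star v ⬝ᵥ w) hvz
      rw [hsum] at h1
      simpa [dotProduct_add, aux_dotProduct_sum, dotProduct_smul, smul_eq_mul, hr]
        using h1
    have hbre : (star v ⬝ᵥ B *ᵥ v).im = 0 := by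
      rw [← Complex.conj_eq_iff_im]
      calc (starRingEnd ℂ) (star v ⬝ᵥ B *ᵥ v)
          = star (star v ⬝ᵥ B *ᵥ v) := rfl
        _ = star (B *ᵥ v) ⬝ᵥ star (star v) := by rw [star_dotProduct_star]
        _ = (star v ᵥ* Bᴴ) ⬝ᵥ v := by rw [star_mulVec, star_star]
        _ = (star v ᵥ* B) ⬝ᵥ v := by rw [hB.eq]
        _ = star v ⬝ᵥ B *ᵥ v := by rw [← dotProduct_mulVec]
    have hrim : ∀ i, (r i).im = 0 := fun i => ((Complex.le_def.mp (hrpos i)).2).symm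
    have him : ∑ i, (z i).im * (r i).re = 0 := by
      have h2 := congrArg Complex.im hb
      simp only [Complex.add_im, Complex.im_sum, Complex.mul_im, Complex.zero_im] at h2
      rw [hbre] at h2
      simp only [hrim, mul_zero, add_zero] at h2
      simpa using h2
    have hri : ∀ i, (r i).re = 0 := by
      intro i
      have hnn : ∀ j ∈ Finset.univ, 0 ≤ (z j).im * (r j).re := fun j _ =>
        mul_nonneg (le_of_lt (hz j)) (Complex.le_def.mp (hrpos j)).1
      have h3 := (Finset.sum_eq_zero_iff_of_nonneg hnn).mp him i (Finset.mem_univ i)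
      exact (mul_eq_zero.mp h3).resolve_left (ne_of_gt (hz i))
    have hMv : ∀ i, (M i) *ᵥ v = 0 := by
      intro i
      exact ((hM i).dotProduct_mulVec_zero_iff v).mp
        (Complex.ext (hri i) (hrim i))
    have hBv : B *ᵥ v = 0 := by
      have h4 := hvz
      rw [hsum] at h4
      simpa [hMv] using h4
    intro w
    refine Matrix.exists_mulVec_eq_zero_iff.mp ⟨v, hv, ?_⟩
    rw [hsum]
    simp [hMv, hBv]
  · right
    intro z hz hdet
    exact h ⟨z, hz, hdet⟩
end

section
/- Let A be a real n×m matrix with full row rank n and n ≤ m, and let L = Aᵀ A. Then the polynomial in m+1 complex variables g(z, y) = ∑_{S ⊆ {1,…,m}, |S| ≥ n} e_n(L_{S,S}) · y^{|S|−n} · ∏_{i ∉ S} z_i is real stable; in particular, g(z, y) ≠ 0 whenever Im(y) > 0 and Im(z_i) > 0 for all i = 1,…,m. -/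
open Matrix BigOperators Finset

variable {n m : ℕ}

lemma cb_expand (B : Matrix (Fin n) (Fin m) ℂ) (w : Fin m → ℂ) :
    (B * Matrix.diagonal w * Bᵀ).det
      = ∑ φ : Fin n → Fin m,
          (∏ k, (w (φ k) * B k (φ k))) * (Bᵀ.submatrix φ id).det := by
  classical
  have hM : (fun k => (B * Matrix.diagonal w * Bᵀ) k)
      = fun k => ∑ i : Fin m, (w i * B k i) • (Bᵀ i) := by
    funext k l
    simp only [Finset.sum_apply, Pi.smul_apply, smul_eq_mul]
    rw [Matrix.mul_apply]
    refine Finset.sum_congr rfl fun i _ => ?_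
    rw [Matrix.mul_apply, Matrix.transpose_apply]
    rw [Finset.sum_eq_single i]
    · rw [Matrix.diagonal_apply_eq]; ring
    · intro j _ hj; simp [Matrix.diagonal_apply_ne _ hj]
    · simp
  have h1 : (B * Matrix.diagonal w * Bᵀ).det
      = Matrix.detRowAlternating.toMultilinearMap
          (fun k => ∑ i : Fin m, (w i * B k i) • (Bᵀ i)) := by
    rw [← hM]; rfl
  rw [h1, MultilinearMap.map_sum]
  refine Finset.sum_congr rfl fun φ _ => ?_
  have h2 := MultilinearMap.map_smul_univ Matrix.detRowAlternating.toMultilinearMap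
    (fun k => w (φ k) * B k (φ k)) (fun k => Bᵀ (φ k))
  have h3 : (Matrix.detRowAlternating (fun k => Bᵀ (φ k)) : ℂ) = (Bᵀ.submatrix φ id).det := rfl
  rw [h2, smul_eq_mul]
  congr 1

lemma cb_inner (B : Matrix (Fin n) (Fin m) ℂ) (w : Fin m → ℂ) (T : Finset (Fin m))
    (hT : T.card = n) :
    (∑ σ : Equiv.Perm (Fin n),
      (∏ k, (w ((T.orderIsoOfFin hT (σ k) : Fin m)) * B k ((T.orderIsoOfFin hT (σ k) : Fin m))))
        * (Bᵀ.submatrix (fun k => ((T.orderIsoOfFin hT (σ k) : Fin m))) id).det)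
    = (∏ i ∈ T, w i) *
        ((Bᵀ * B).submatrix (fun p : {x // x ∈ T} => p.1) (fun p : {x // x ∈ T} => p.1)).det := by
  classical
  set e := T.orderIsoOfFin hT with he
  set c : Fin n → Fin m := fun k => (e k : Fin m) with hc
  set P : Matrix (Fin n) (Fin n) ℂ := B.submatrix id c with hP
  have hw : ∀ σ : Equiv.Perm (Fin n), (∏ k, w (c (σ k))) = ∏ i ∈ T, w i := by
    intro σ
    rw [Equiv.prod_comp σ (fun k => w (c k)), ← Finset.prod_coe_sort T w]
    exact Equiv.prod_comp e.toEquiv (fun x => w ↑x)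
  have hPt : Bᵀ.submatrix c id = Pᵀ := by
    rw [hP, Matrix.transpose_submatrix]
  have hdet2 : ∀ σ : Equiv.Perm (Fin n),
      (Bᵀ.submatrix (fun k => c (σ k)) id).det
        = ((Equiv.Perm.sign σ : ℤ) : ℂ) * Pᵀ.det := by
    intro σ
    have h5 : Bᵀ.submatrix (fun k => c (σ k)) id = (Bᵀ.submatrix c id).submatrix σ id := rfl
    rw [h5, hPt, Matrix.det_permute]
  have hmatch : ((Bᵀ * B).submatrix (fun p : {x // x ∈ T} => p.1)
      (fun p : {x // x ∈ T} => p.1)).det = Pᵀ.det * Pᵀ.det := by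
    have h4 : ((Bᵀ * B).submatrix (fun p : {x // x ∈ T} => p.1)
        (fun p : {x // x ∈ T} => p.1)).submatrix e.toEquiv e.toEquiv = Pᵀ * P := by
      ext k l
      simp [Matrix.mul_apply, hP, hc]
    rw [← Matrix.det_submatrix_equiv_self e.toEquiv, h4, Matrix.det_mul, Matrix.det_transpose]
  have step : ∀ σ : Equiv.Perm (Fin n),
      (∏ k, (w (c (σ k)) * B k (c (σ k)))) * (Bᵀ.submatrix (fun k => c (σ k)) id).det
      = ((∏ i ∈ T, w i) * Pᵀ.det) * (((Equiv.Perm.sign σ : ℤ) : ℂ) * ∏ k, Pᵀ (σ k) k) := by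
    intro σ
    rw [Finset.prod_mul_distrib, hw σ, hdet2 σ]
    have h6 : (∏ k, B k (c (σ k))) = ∏ k, Pᵀ (σ k) k := rfl
    rw [h6]; ring
  calc (∑ σ : Equiv.Perm (Fin n),
      (∏ k, (w (c (σ k)) * B k (c (σ k)))) * (Bᵀ.submatrix (fun k => c (σ k)) id).det)
      = ∑ σ : Equiv.Perm (Fin n), ((∏ i ∈ T, w i) * Pᵀ.det)
          * (((Equiv.Perm.sign σ : ℤ) : ℂ) * ∏ k, Pᵀ (σ k) k) :=
        Finset.sum_congr rfl fun σ _ => step σ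
    _ = ((∏ i ∈ T, w i) * Pᵀ.det) * ∑ σ : Equiv.Perm (Fin n),
          (((Equiv.Perm.sign σ : ℤ) : ℂ) * ∏ k, Pᵀ (σ k) k) := by rw [← Finset.mul_sum]
    _ = ((∏ i ∈ T, w i) * Pᵀ.det) * Pᵀ.det := by rw [← Matrix.det_apply']
    _ = (∏ i ∈ T, w i) * ((Bᵀ * B).submatrix (fun p : {x // x ∈ T} => p.1)
          (fun p : {x // x ∈ T} => p.1)).det := by rw [hmatch]; ring

lemma cb (hnm : n ≤ m) (B : Matrix (Fin n) (Fin m) ℂ) (w : Fin m → ℂ) :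
    (B * Matrix.diagonal w * Bᵀ).det
      = ∑ T ∈ (Finset.univ : Finset (Fin m)).powersetCard n,
          (∏ i ∈ T, w i) *
            ((Bᵀ * B).submatrix (fun p : {x // x ∈ T} => p.1)
              (fun p : {x // x ∈ T} => p.1)).det := by
  classical
  rw [cb_expand]
  set col : Finset (Fin m) → Fin n → Fin m :=
    fun T k => if h : T.card = n then ((T.orderIsoOfFin h k : Fin m))
      else Fin.castLE hnm k with hcol
  have hcolT : ∀ (T : Finset (Fin m)) (h : T.card = n),
      col T = fun k => ((T.orderIsoOfFin h k : Fin m)) := by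
    intro T h; funext k; simp only [hcol, dif_pos h]
  have hmemT : ∀ (T : Finset (Fin m)) (h : T.card = n) (k : Fin n), col T k ∈ T := by
    intro T h k; rw [hcolT T h]; exact Subtype.coe_prop _
  have hinjcol : ∀ (T : Finset (Fin m)) (h : T.card = n), Function.Injective (col T) := by
    intro T h a b hab
    rw [hcolT T h] at hab
    exact (T.orderIsoOfFin h).injective (Subtype.coe_injective hab)
  have himage : ∀ (T : Finset (Fin m)) (h : T.card = n),
      Finset.image (col T) Finset.univ = T := by
    intro T h
    apply Finset.eq_of_subset_of_card_le
    · intro x hx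
      obtain ⟨k, _, rfl⟩ := Finset.mem_image.mp hx
      exact hmemT T h k
    · rw [Finset.card_image_of_injective _ (hinjcol T h), Finset.card_univ, Fintype.card_fin, h]
  have hvan : ∀ φ ∈ (Finset.univ : Finset (Fin n → Fin m)),
      (∏ k, (w (φ k) * B k (φ k))) * (Bᵀ.submatrix φ id).det ≠ 0 → Function.Injective φ := by
    intro φ _ hne
    by_contra hinj
    apply hne
    rw [Function.not_injective_iff] at hinj
    obtain ⟨a, b, hab, hne'⟩ := hinj
    have hz : (Bᵀ.submatrix φ id).det = 0 :=
      Matrix.det_zero_of_row_eq hne' (by funext l; simp [Matrix.submatrix_apply, hab])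
    rw [hz, mul_zero]
  rw [← Finset.sum_filter_of_ne hvan]
  have hinner : ∀ T ∈ (Finset.univ : Finset (Fin m)).powersetCard n,
      (∏ i ∈ T, w i) * ((Bᵀ * B).submatrix (fun p : {x // x ∈ T} => p.1)
          (fun p : {x // x ∈ T} => p.1)).det
      = ∑ σ : Equiv.Perm (Fin n),
          (∏ k, (w (col T (σ k)) * B k (col T (σ k))))
            * (Bᵀ.submatrix (fun k => col T (σ k)) id).det := by
    intro T hT
    have hTc : T.card = n := Finset.mem_powersetCard_univ.mp hT
    rw [hcolT T hTc]
    exact (cb_inner B w T hTc).symm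
  rw [Finset.sum_congr rfl hinner, Finset.sum_sigma']
  refine (Finset.sum_bij (fun p _ => fun k => col p.1 (p.2 k)) ?_ ?_ ?_ ?_).symm
  · rintro ⟨T, σ⟩ hp
    have hTc : T.card = n :=
      Finset.mem_powersetCard_univ.mp (Finset.mem_sigma.mp hp).1
    exact Finset.mem_filter.mpr ⟨Finset.mem_univ _, (hinjcol T hTc).comp σ.injective⟩
  · rintro ⟨T₁, σ₁⟩ hp₁ ⟨T₂, σ₂⟩ hp₂ heq
    have hTc₁ : T₁.card = n := Finset.mem_powersetCard_univ.mp (Finset.mem_sigma.mp hp₁).1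
    have hTc₂ : T₂.card = n := Finset.mem_powersetCard_univ.mp (Finset.mem_sigma.mp hp₂).1
    have heq' : (fun k => col T₁ (σ₁ k)) = fun k => col T₂ (σ₂ k) := heq
    have him : ∀ (T : Finset (Fin m)) (hT : T.card = n) (σ : Equiv.Perm (Fin n)),
        Finset.image (fun k => col T (σ k)) Finset.univ = T := by
      intro T hT σ
      have h0 : Finset.image (fun k => col T (σ k)) Finset.univ
          = Finset.image (col T) (Finset.image (⇑σ) Finset.univ) := by
        rw [Finset.image_image]; rfl
      rw [h0, Finset.image_univ_equiv, himage T hT]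
    have hT : T₁ = T₂ := by
      rw [← him T₁ hTc₁ σ₁, ← him T₂ hTc₂ σ₂, heq']
    subst hT
    have hσ : σ₁ = σ₂ :=
      Equiv.ext fun k => hinjcol T₁ hTc₁ (congrFun heq' k)
    rw [hσ]
  · intro φ hφ
    have hφinj : Function.Injective φ := (Finset.mem_filter.mp hφ).2
    set T : Finset (Fin m) := Finset.image φ Finset.univ with hTdef
    have hTc : T.card = n := by
      rw [hTdef, Finset.card_image_of_injective _ hφinj, Finset.card_univ, Fintype.card_fin]
    have hψbij : Function.Bijective (fun k => (⟨φ k, Finset.mem_image_of_mem φ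
        (Finset.mem_univ k)⟩ : {x // x ∈ T})) := by
      refine (Fintype.bijective_iff_injective_and_card _).mpr ⟨?_, ?_⟩
      · intro a b hab
        exact hφinj (congrArg Subtype.val hab)
      · rw [Fintype.card_coe, hTc, Fintype.card_fin]
    refine ⟨⟨T, (Equiv.ofBijective _ hψbij).trans (T.orderIsoOfFin hTc).toEquiv.symm⟩,
        Finset.mem_sigma.mpr ⟨Finset.mem_powersetCard_univ.mpr hTc, Finset.mem_univ _⟩, ?_⟩
    funext k
    show col T (((Equiv.ofBijective _ hψbij).trans (T.orderIsoOfFin hTc).toEquiv.symm) k) = φ k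
    rw [hcolT T hTc]
    simp [Equiv.trans_apply]
  · rintro ⟨T, σ⟩ _
    rfl

lemma swap_lemma (d : Finset (Fin m) → ℂ) (z : Fin m → ℂ) (y : ℂ) :
    ∑ S ∈ Finset.univ.filter (fun S : Finset (Fin m) => n ≤ S.card),
        (∑ T ∈ S.powersetCard n, d T) * y ^ (S.card - n) * ∏ i ∈ Sᶜ, z i
      = ∑ T ∈ (Finset.univ : Finset (Fin m)).powersetCard n,
          d T * ∏ i ∈ Tᶜ, (y + z i) := by
  classical
  rw [Finset.sum_filter_of_ne (fun S _ hne => by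
    by_contra hcard
    apply hne
    rw [Finset.powersetCard_eq_empty.mpr (lt_of_not_ge hcard), Finset.sum_empty,
      zero_mul, zero_mul])]
  have hps : ∀ S : Finset (Fin m),
      S.powersetCard n = (Finset.univ.powersetCard n).filter (· ⊆ S) := by
    intro S
    ext T
    simp only [Finset.mem_powersetCard, Finset.mem_filter, Finset.subset_univ, true_and]
    tauto
  have step1 : ∀ S : Finset (Fin m),
      (∑ T ∈ S.powersetCard n, d T) * y ^ (S.card - n) * ∏ i ∈ Sᶜ, z i
        = ∑ T ∈ Finset.univ.powersetCard n,
            if T ⊆ S then d T * y ^ (S.card - n) * ∏ i ∈ Sᶜ, z i else 0 := by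
    intro S
    rw [hps S, Finset.sum_filter, Finset.sum_mul, Finset.sum_mul]
    exact Finset.sum_congr rfl fun T _ => by split <;> simp
  rw [Finset.sum_congr rfl fun S _ => step1 S, Finset.sum_comm]
  refine Finset.sum_congr rfl fun T hT => ?_
  have hTc : T.card = n := Finset.mem_powersetCard_univ.mp hT
  rw [← Finset.sum_filter]
  -- now : ∑ S ∈ univ.filter (T ⊆ ·), d T * y ^ (S.card - n) * ∏ i ∈ Sᶜ, z i
  --     = d T * ∏ i ∈ Tᶜ, (y + z i)
  rw [Finset.prod_add, Finset.mul_sum]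
  refine (Finset.sum_bij (fun U (_ : U ∈ Tᶜ.powerset) => T ∪ U) ?_ ?_ ?_ ?_).symm
  · intro U hU
    exact Finset.mem_filter.mpr ⟨Finset.mem_univ _, Finset.subset_union_left⟩
  · intro U₁ hU₁ U₂ hU₂ heq
    have hd₁ : Disjoint T U₁ := Finset.disjoint_left.mpr fun a haT haU =>
      (Finset.mem_compl.mp (Finset.mem_powerset.mp hU₁ haU)) haT
    have hd₂ : Disjoint T U₂ := Finset.disjoint_left.mpr fun a haT haU =>
      (Finset.mem_compl.mp (Finset.mem_powerset.mp hU₂ haU)) haT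
    have heq' : T ∪ U₁ = T ∪ U₂ := heq
    rw [← Finset.union_sdiff_cancel_left hd₁, ← Finset.union_sdiff_cancel_left hd₂, heq']
  · intro S hS
    have hTS : T ⊆ S := (Finset.mem_filter.mp hS).2
    refine ⟨S \ T, Finset.mem_powerset.mpr fun a ha => Finset.mem_compl.mpr
      (Finset.mem_sdiff.mp ha).2, ?_⟩
    exact Finset.union_sdiff_of_subset hTS
  · intro U hU
    have hd : Disjoint T U := Finset.disjoint_left.mpr fun a haT haU =>
      (Finset.mem_compl.mp (Finset.mem_powerset.mp hU haU)) haT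
    have hcard : (T ∪ U).card - n = U.card := by
      rw [Finset.card_union_of_disjoint hd, hTc, Nat.add_sub_cancel_left]
    have hcompl : (T ∪ U)ᶜ = Tᶜ \ U := by
      ext a
      simp only [Finset.mem_compl, Finset.mem_sdiff, Finset.mem_union]
      tauto
    rw [hcard, hcompl, Finset.prod_const]
    ring

lemma det_BWBt_ne_zero (A : Matrix (Fin n) (Fin m) ℝ) (hA : A.rank = n)
    (w : Fin m → ℂ) (hw : ∀ i, (w i).im < 0) :
    ((A.map Complex.ofRealHom) * Matrix.diagonal w * (A.map Complex.ofRealHom)ᵀ).det ≠ 0 := by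
  classical
  set B : Matrix (Fin n) (Fin m) ℂ := A.map Complex.ofRealHom with hB
  intro hdet
  obtain ⟨v, hv, hMv⟩ := Matrix.exists_mulVec_eq_zero_iff.mpr hdet
  set c : Fin m → ℂ := Bᵀ *ᵥ v with hcdef
  have hsc : Matrix.vecMul (star v) B = star c := by
    funext j
    simp only [Matrix.vecMul, dotProduct, hcdef, Matrix.mulVec, Pi.star_apply,
      Matrix.transpose_apply, star_sum, star_mul', hB, Matrix.map_apply,
      Complex.ofRealHom_eq_coe, Complex.star_def, Complex.conj_ofReal]
    exact Finset.sum_congr rfl fun k _ => mul_comm _ _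
  have key : (0:ℂ) = ∑ j, star (c j) * w j * c j := by
    have h0 : dotProduct (star v) ((B * Matrix.diagonal w * Bᵀ) *ᵥ v) = 0 := by
      rw [hMv, dotProduct_zero]
    rw [← h0]
    rw [show (B * Matrix.diagonal w * Bᵀ) *ᵥ v = (B * Matrix.diagonal w) *ᵥ c by
      rw [hcdef, Matrix.mulVec_mulVec]]
    rw [Matrix.dotProduct_mulVec, ← Matrix.vecMul_vecMul, hsc]
    simp only [dotProduct, Matrix.vecMul_diagonal, Pi.star_apply]
  have h2 : (0:ℝ) = ∑ j, Complex.normSq (c j) * (w j).im := by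
    have h3 := congrArg Complex.im key
    rw [Complex.im_sum] at h3
    have h4 : ∀ j, (star (c j) * w j * c j).im = Complex.normSq (c j) * (w j).im := by
      intro j
      have h5 : star (c j) * w j * c j = ((Complex.normSq (c j) : ℝ) : ℂ) * w j := by
        rw [Complex.normSq_eq_conj_mul_self, Complex.star_def]; ring
      rw [h5]
      simp [Complex.mul_im]
    simpa only [Complex.zero_im, h4] using h3
  have hc0 : ∀ j, c j = 0 := by
    have hterm : ∀ j ∈ Finset.univ, Complex.normSq (c j) * (w j).im ≤ 0 :=
      fun j _ => mul_nonpos_of_nonneg_of_nonpos (Complex.normSq_nonneg _) (le_of_lt (hw j))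
    have h6 := (Finset.sum_eq_zero_iff_of_nonpos hterm).mp h2.symm
    intro j
    rcases mul_eq_zero.mp (h6 j (Finset.mem_univ j)) with h | h
    · exact Complex.normSq_eq_zero.mp h
    · exact absurd h (ne_of_lt (hw j))
  have hAc : ∀ j, ∑ k, (A k j : ℂ) * v k = 0 := by
    intro j
    have h7 := hc0 j
    simpa [hcdef, Matrix.mulVec, dotProduct, hB, Matrix.map_apply,
      Matrix.transpose_apply] using h7
  have hre : Aᵀ *ᵥ (fun k => (v k).re) = 0 := by
    funext j
    have h8 := congrArg Complex.re (hAc j)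
    rw [Complex.re_sum] at h8
    simpa [Matrix.mulVec, dotProduct, Matrix.transpose_apply, Complex.mul_re]
      using h8
  have him : Aᵀ *ᵥ (fun k => (v k).im) = 0 := by
    funext j
    have h8 := congrArg Complex.im (hAc j)
    rw [Complex.im_sum] at h8
    simpa [Matrix.mulVec, dotProduct, Matrix.transpose_apply, Complex.mul_im]
      using h8
  have hrank : (A * Aᵀ).rank = n := by rw [Matrix.rank_self_mul_transpose, hA]
  have htop : LinearMap.range (A * Aᵀ).mulVecLin = ⊤ := by
    apply Submodule.eq_top_of_finrank_eq
    rw [Module.finrank_fin_fun]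
    exact hrank
  have hinj : Function.Injective (A * Aᵀ).mulVecLin :=
    LinearMap.injective_iff_surjective.mpr (LinearMap.range_eq_top.mp htop)
  have hzero : ∀ u : Fin n → ℝ, Aᵀ *ᵥ u = 0 → u = 0 := by
    intro u hu
    apply hinj
    rw [map_zero, Matrix.mulVecLin_apply, ← Matrix.mulVec_mulVec, hu, Matrix.mulVec_zero]
  have hvre := hzero _ hre
  have hvim := hzero _ him
  apply hv
  funext k
  exact Complex.ext (by simpa using congrFun hvre k) (by simpa using congrFun hvim k)

/-- For a full-row-rank real `n × m` matrix `A` (`n ≤ m`) with `L = Aᵀ A`, the polynomial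
`g(z, y) = ∑_{S ⊆ {1,…,m}, |S| ≥ n} e_n(L_{S,S}) y^{|S| - n} ∏_{i ∉ S} z_i`
is real stable: it does not vanish whenever `Im(y) > 0` and `Im(z_i) > 0` for all `i`.
Here `e_n(L_{S,S}) = ∑_{T ⊆ S, |T| = n} det(L_{T,T})`. -/
theorem dvs_intermediate_polynomial_real_stable {n m : ℕ} (A : Matrix (Fin n) (Fin m) ℝ)
    (hA : A.rank = n) (hnm : n ≤ m)
    (z : Fin m → ℂ) (y : ℂ) (hz : ∀ i, 0 < (z i).im) (hy : 0 < y.im) :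
    ∑ S ∈ Finset.univ.filter (fun S : Finset (Fin m) => n ≤ S.card),
        ((∑ T ∈ S.powersetCard n,
            ((Aᵀ * A).submatrix (fun p : {x // x ∈ T} => p.1)
              (fun p : {x // x ∈ T} => p.1)).det : ℝ) : ℂ)
          * y ^ (S.card - n) * ∏ i ∈ Sᶜ, z i ≠ 0 := by
  classical
  set B : Matrix (Fin n) (Fin m) ℂ := A.map Complex.ofRealHom with hB
  set w : Fin m → ℂ := fun i => (y + z i)⁻¹ with hw
  have hyz : ∀ i, y + z i ≠ 0 := by
    intro i h
    have : (y + z i).im = 0 := by rw [h]; simp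
    rw [Complex.add_im] at this
    linarith [hy, hz i]
  have hwim : ∀ i, (w i).im < 0 := by
    intro i
    rw [hw, Complex.inv_im, Complex.add_im]
    apply div_neg_of_neg_of_pos
    · linarith [hy, hz i]
    · exact Complex.normSq_pos.mpr (hyz i)
  have dcast : ∀ T : Finset (Fin m),
      ((((Aᵀ * A).submatrix (fun p : {x // x ∈ T} => p.1)
          (fun p : {x // x ∈ T} => p.1)).det : ℝ) : ℂ)
        = ((Bᵀ * B).submatrix (fun p : {x // x ∈ T} => p.1)
            (fun p : {x // x ∈ T} => p.1)).det := by
    intro T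
    have h1 := (Complex.ofRealHom).map_det
      ((Aᵀ * A).submatrix (fun p : {x // x ∈ T} => p.1) (fun p : {x // x ∈ T} => p.1))
    have h2 : ((Aᵀ * A).submatrix (fun p : {x // x ∈ T} => p.1)
        (fun p : {x // x ∈ T} => p.1)).map Complex.ofRealHom
        = (Bᵀ * B).submatrix (fun p : {x // x ∈ T} => p.1) (fun p : {x // x ∈ T} => p.1) := by
      ext p q
      simp [Matrix.map_apply, Matrix.submatrix_apply, Matrix.mul_apply, hB]
    rw [← h2]
    rw [RingHom.mapMatrix_apply] at h1
    exact h1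
  have hpush : ∀ S ∈ Finset.univ.filter (fun S : Finset (Fin m) => n ≤ S.card),
      ((∑ T ∈ S.powersetCard n,
        ((Aᵀ * A).submatrix (fun p : {x // x ∈ T} => p.1)
          (fun p : {x // x ∈ T} => p.1)).det : ℝ) : ℂ) * y ^ (S.card - n) * ∏ i ∈ Sᶜ, z i
      = (∑ T ∈ S.powersetCard n,
        ((((Aᵀ * A).submatrix (fun p : {x // x ∈ T} => p.1)
          (fun p : {x // x ∈ T} => p.1)).det : ℝ) : ℂ)) * y ^ (S.card - n) * ∏ i ∈ Sᶜ, z i := by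
    intro S _
    push_cast
    ring
  rw [Finset.sum_congr rfl hpush, swap_lemma]
  have hprodT : ∀ T : Finset (Fin m),
      (∏ i ∈ Tᶜ, (y + z i)) = (∏ i, (y + z i)) * ∏ i ∈ T, w i := by
    intro T
    have h3 : (∏ i ∈ T, (y + z i)) * (∏ i ∈ T, w i) = 1 := by
      rw [← Finset.prod_mul_distrib]
      exact Finset.prod_eq_one fun i _ => mul_inv_cancel₀ (hyz i)
    calc (∏ i ∈ Tᶜ, (y + z i))
        = ((∏ i ∈ T, (y + z i)) * ∏ i ∈ Tᶜ, (y + z i)) * ∏ i ∈ T, w i := by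
          rw [show ((∏ i ∈ T, (y + z i)) * ∏ i ∈ Tᶜ, (y + z i)) * ∏ i ∈ T, w i
            = ((∏ i ∈ T, (y + z i)) * ∏ i ∈ T, w i) * ∏ i ∈ Tᶜ, (y + z i) from by ring,
            h3, one_mul]
      _ = (∏ i, (y + z i)) * ∏ i ∈ T, w i := by
          rw [Finset.prod_mul_prod_compl]
  have hfinal : ∑ T ∈ (Finset.univ : Finset (Fin m)).powersetCard n,
      ((((Aᵀ * A).submatrix (fun p : {x // x ∈ T} => p.1)
        (fun p : {x // x ∈ T} => p.1)).det : ℝ) : ℂ) * ∏ i ∈ Tᶜ, (y + z i)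
      = (∏ i, (y + z i)) * (B * Matrix.diagonal w * Bᵀ).det := by
    rw [cb hnm B w, Finset.mul_sum]
    refine Finset.sum_congr rfl fun T _ => ?_
    rw [dcast T, hprodT T]
    ring
  rw [hfinal]
  exact mul_ne_zero (Finset.prod_ne_zero_iff.mpr fun i _ => hyz i)
    (det_BWBt_ne_zero A hA w hwim)
end

section
/- Let f be a real stable polynomial in the complex variables z_1,…,z_m and let μ ∈ ℝ. Then the polynomial g(z_2,…,z_m) = f(μ, z_2,…,z_m), obtained by substituting the real value μ for z_1, is either identically zero or real stable in the variables z_2,…,z_m. -/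
open MvPolynomial BigOperators

noncomputable def Complex.abs : AbsoluteValue ℂ ℝ := NormedField.toAbsoluteValue ℂ

@[simp] lemma Complex.abs_apply (z : ℂ) : Complex.abs z = ‖z‖ := rfl

lemma Complex.abs_ofReal (r : ℝ) : Complex.abs (r : ℂ) = |r| := by simp

lemma Complex.continuous_abs : Continuous Complex.abs := continuous_norm

/-- Absolute value of a multiset product. -/
lemma rss_abs_multiset_prod (s : Multiset ℂ) :
    Complex.abs s.prod = (s.map Complex.abs).prod := by
  induction s using Multiset.induction with
  | empty => simp
  | cons a s ih => simp [ih]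

/-- If all roots of `p` have absolute value at least `δ`, then on the disk of radius `δ/2`
the values of `p` are controlled by the value at `0`. -/
lemma rss_eval_abs_le (p : Polynomial ℂ) (δ : ℝ) (hδ : 0 < δ)
    (hroots : ∀ r ∈ p.roots, δ ≤ Complex.abs r) (t : ℂ) (ht : Complex.abs t ≤ δ / 2) :
    Complex.abs (p.eval t) ≤ (3 / 2 : ℝ) ^ p.natDegree * Complex.abs (p.eval 0) := by
  rcases eq_or_ne p 0 with rfl | hp
  · simp
  have hsplit : p.Splits := IsAlgClosed.splits p
  have hfact := hsplit.eq_prod_roots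
  have hcard : p.roots.card = p.natDegree := by
    have h := hsplit.natDegree_eq_card_roots
    exact h.symm
  have hev : ∀ z : ℂ, Complex.abs (p.eval z)
      = Complex.abs p.leadingCoeff * (p.roots.map (fun r => Complex.abs (z - r))).prod := by
    intro z
    conv_lhs => rw [hfact]
    rw [Polynomial.eval_mul, Polynomial.eval_C, Polynomial.eval_multiset_prod, map_mul,
      Multiset.map_map, rss_abs_multiset_prod, Multiset.map_map]
    congr 1
    refine congrArg Multiset.prod (Multiset.map_congr rfl ?_)
    intro r _
    simp
  rw [hev t, hev 0]
  have h0 : (p.roots.map (fun r => Complex.abs ((0 : ℂ) - r))).prod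
      = (p.roots.map (fun r => Complex.abs r)).prod := by
    congr 1
    apply Multiset.map_congr rfl
    intro r _
    simp
  rw [h0]
  have key : (p.roots.map (fun r => Complex.abs (t - r))).prod
      ≤ (p.roots.map (fun r => (3 / 2 : ℝ) * Complex.abs r)).prod := by
    apply Multiset.prod_map_le_prod_map₀
    · intro r _; exact AbsoluteValue.nonneg _ _
    · intro r hr
      have h1 : δ ≤ Complex.abs r := hroots r hr
      have h2 : Complex.abs (t - r) ≤ Complex.abs t + Complex.abs r := by
        simpa [sub_eq_add_neg, map_neg] using Complex.abs.add_le t (-r)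
      linarith
  have hsplitprod : (p.roots.map (fun r => (3 / 2 : ℝ) * Complex.abs r)).prod
      = (3 / 2 : ℝ) ^ p.natDegree * (p.roots.map (fun r => Complex.abs r)).prod := by
    rw [Multiset.prod_map_mul]
    congr 1
    rw [Multiset.map_const', Multiset.prod_replicate, hcard]
  calc Complex.abs p.leadingCoeff * (p.roots.map (fun r => Complex.abs (t - r))).prod
      ≤ Complex.abs p.leadingCoeff * (p.roots.map (fun r => (3/2 : ℝ) * Complex.abs r)).prod :=
        mul_le_mul_of_nonneg_left key (AbsoluteValue.nonneg _ _)
    _ = (3 / 2 : ℝ) ^ p.natDegree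
        * (Complex.abs p.leadingCoeff * (p.roots.map (fun r => Complex.abs r)).prod) := by
        rw [hsplitprod]; ring

/-- Degree bound for substituting polynomials of degree at most one into the variables. -/
lemma rss_natDegree_eval₂_le {σ : Type*} (q : MvPolynomial σ ℂ) (g : σ → Polynomial ℂ)
    (hg : ∀ i, (g i).natDegree ≤ 1) :
    (MvPolynomial.eval₂ Polynomial.C g q).natDegree ≤ q.totalDegree := by
  rw [MvPolynomial.eval₂_eq]
  apply Polynomial.natDegree_sum_le_of_forall_le
  intro d hd
  calc (Polynomial.C (q.coeff d) * ∏ i ∈ d.support, g i ^ d i).natDegree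
      ≤ (Polynomial.C (q.coeff d)).natDegree + (∏ i ∈ d.support, g i ^ d i).natDegree :=
        Polynomial.natDegree_mul_le
    _ ≤ 0 + ∑ i ∈ d.support, (g i ^ d i).natDegree := by
        gcongr
        · exact le_of_eq (Polynomial.natDegree_C _)
        · exact Polynomial.natDegree_prod_le _ _
    _ ≤ ∑ i ∈ d.support, d i := by
        rw [zero_add]
        apply Finset.sum_le_sum
        intro i _
        calc (g i ^ d i).natDegree ≤ d i * (g i).natDegree := Polynomial.natDegree_pow_le
          _ ≤ d i * 1 := Nat.mul_le_mul_left _ (hg i)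
          _ = d i := Nat.mul_one _
    _ ≤ q.totalDegree := MvPolynomial.le_totalDegree hd

/-- **Substitution preserves real stability.**  Let `f` be a real stable polynomial in
`z_1, …, z_{m+1}` (real coefficients, nonvanishing when all variables have positive
imaginary part) and let `μ ∈ ℝ`.  Then `g(z_2, …, z_{m+1}) = f(μ, z_2, …, z_{m+1})`
is either identically zero or real stable. -/
theorem real_stable_substitution {m : ℕ} (f : MvPolynomial (Fin (m + 1)) ℝ)
    (hf : ∀ z : Fin (m + 1) → ℂ, (∀ i, 0 < (z i).im) → MvPolynomial.aeval z f ≠ 0)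
    (μ : ℝ) :
    (∀ w : Fin m → ℂ, MvPolynomial.aeval (Fin.cons (μ : ℂ) w) f = 0) ∨
    (∀ w : Fin m → ℂ, (∀ i, 0 < (w i).im) →
        MvPolynomial.aeval (Fin.cons (μ : ℂ) w) f ≠ 0) := by
  rw [or_iff_not_imp_right]
  intro hns
  push_neg at hns
  obtain ⟨w', hw', hgw'⟩ := hns
  intro w₀
  by_contra hg0
  -- the complexification of `f`
  set fC : MvPolynomial (Fin (m + 1)) ℂ := MvPolynomial.map (algebraMap ℝ ℂ) f with hfC
  have haev : ∀ z : Fin (m + 1) → ℂ, MvPolynomial.aeval z f = MvPolynomial.eval z fC := by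
    intro z
    rw [hfC, MvPolynomial.eval_map]
    rfl
  cases isEmpty_or_nonempty (Fin m) with
  | inl h =>
      exact hg0 (by rw [Subsingleton.elim w₀ w']; exact hgw')
  | inr h =>
  -- the direction and the safety radius
  set v : Fin m → ℂ := fun i => w₀ i - w' i with hv
  set δ : ℝ := Finset.univ.inf' Finset.univ_nonempty
      (fun i => (w' i).im / (Complex.abs (v i) + 1)) with hδdef
  have hδpos : 0 < δ := by
    rw [hδdef, Finset.lt_inf'_iff]
    intro i _
    exact div_pos (hw' i) (by positivity)
  have him : ∀ t : ℂ, Complex.abs t < δ → ∀ i, 0 < (w' i + v i * t).im := by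
    intro t ht i
    have h1 : δ ≤ (w' i).im / (Complex.abs (v i) + 1) := by
      rw [hδdef]
      exact Finset.inf'_le _ (Finset.mem_univ i)
    have h2 : Complex.abs (v i * t) < (w' i).im := by
      rw [map_mul]
      calc Complex.abs (v i) * Complex.abs t
          ≤ (Complex.abs (v i) + 1) * Complex.abs t := by
            have := AbsoluteValue.nonneg Complex.abs t
            nlinarith [AbsoluteValue.nonneg Complex.abs (v i)]
        _ < (Complex.abs (v i) + 1) * δ := by
            have hpos : (0:ℝ) < Complex.abs (v i) + 1 := by positivity
            exact (mul_lt_mul_iff_right₀ hpos).2 ht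
        _ ≤ (Complex.abs (v i) + 1) * ((w' i).im / (Complex.abs (v i) + 1)) := by
            have hpos : (0:ℝ) < Complex.abs (v i) + 1 := by positivity
            exact mul_le_mul_of_nonneg_left h1 hpos.le
        _ = (w' i).im := by field_simp
    have h3 : |(v i * t).im| ≤ Complex.abs (v i * t) := Complex.abs_im_le_norm _
    have h4 : -(w' i).im < (v i * t).im := neg_lt_of_abs_lt (lt_of_le_of_lt h3 h2)
    simp only [Complex.add_im]
    linarith
  -- the polynomial family
  set G : ℂ → Fin (m + 1) → Polynomial ℂ := fun s =>
    Fin.cons (Polynomial.C ((μ : ℂ) + s))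
      (fun i => Polynomial.C (w' i) + Polynomial.C (v i) * Polynomial.X) with hG
  set p : ℂ → Polynomial ℂ := fun s => MvPolynomial.eval₂ Polynomial.C (G s) fC with hp
  -- evaluation formula
  have hEval : ∀ s t : ℂ, (p s).eval t
      = MvPolynomial.eval (Fin.cons ((μ : ℂ) + s) (fun i => w' i + v i * t)) fC := by
    intro s t
    have h1 := MvPolynomial.eval₂_comp_left (Polynomial.evalRingHom t) Polynomial.C (G s) fC
    have h2 : (Polynomial.evalRingHom t).comp Polynomial.C = RingHom.id ℂ := by
      ext a; simp
    have h3 : (Polynomial.evalRingHom t) ∘ (G s)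
        = Fin.cons ((μ : ℂ) + s) (fun i => w' i + v i * t) := by
      funext i
      refine Fin.cases ?_ ?_ i
      · simp [hG]
      · intro j
        simp [hG]
    rw [h2, h3] at h1
    calc (p s).eval t
        = (Polynomial.evalRingHom t) (MvPolynomial.eval₂ Polynomial.C (G s) fC) := rfl
      _ = MvPolynomial.eval₂ (RingHom.id ℂ)
            (Fin.cons ((μ : ℂ) + s) (fun i => w' i + v i * t)) fC := h1
      _ = _ := MvPolynomial.eval₂_id _
  -- degree bound
  set D : ℕ := fC.totalDegree with hD
  have hdeg : ∀ s : ℂ, (p s).natDegree ≤ D := by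
    intro s
    apply rss_natDegree_eval₂_le
    intro i
    refine Fin.cases ?_ ?_ i
    · simp [hG]
    · intro j
      calc (Polynomial.C (w' j) + Polynomial.C (v j) * Polynomial.X).natDegree
          ≤ max (Polynomial.C (w' j)).natDegree
              (Polynomial.C (v j) * Polynomial.X).natDegree := Polynomial.natDegree_add_le _ _
        _ ≤ 1 := by
            apply max_le
            · simp
            · calc (Polynomial.C (v j) * Polynomial.X).natDegree
                  ≤ (Polynomial.C (v j)).natDegree + Polynomial.X.natDegree :=
                    Polynomial.natDegree_mul_le
                _ ≤ 1 := by simp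
  -- roots are far from the origin when `s` has positive imaginary part
  have hroots : ∀ s : ℂ, 0 < s.im → ∀ r ∈ (p s).roots, δ ≤ Complex.abs r := by
    intro s hs r hr
    by_contra habs
    push_neg at habs
    have hroot : (p s).eval r = 0 := (Polynomial.isRoot_of_mem_roots hr)
    rw [hEval s r] at hroot
    apply hf (Fin.cons ((μ : ℂ) + s) (fun i => w' i + v i * r))
    · intro i
      refine Fin.cases ?_ ?_ i
      · simpa [Complex.add_im] using hs
      · intro j
        simpa using him r habs j
    · rw [haev]
      exact hroot
  -- the key estimate, for `0 < s.im`
  have hkey : ∀ s : ℂ, 0 < s.im → ∀ t : ℂ, Complex.abs t ≤ δ / 2 →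
      Complex.abs ((p s).eval t) ≤ (3/2 : ℝ) ^ D * Complex.abs ((p s).eval 0) := by
    intro s hs t ht
    calc Complex.abs ((p s).eval t)
        ≤ (3/2 : ℝ) ^ (p s).natDegree * Complex.abs ((p s).eval 0) :=
          rss_eval_abs_le (p s) δ hδpos (hroots s hs) t ht
      _ ≤ (3/2 : ℝ) ^ D * Complex.abs ((p s).eval 0) := by
          have h15 : (3/2 : ℝ) ^ (p s).natDegree ≤ (3/2 : ℝ) ^ D :=
            pow_le_pow_right₀ (by norm_num) (hdeg s)
          exact mul_le_mul_of_nonneg_right h15 (AbsoluteValue.nonneg _ _)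
  -- pass to the limit `s = iε → 0`
  have hlimit : ∀ t : ℂ, Complex.abs t ≤ δ / 2 → (p 0).eval t = 0 := by
    intro t ht
    -- the continuous function of ε
    have hcont : ∀ τ : ℂ, Continuous (fun ε : ℝ =>
        Complex.abs ((p (ε * Complex.I)).eval τ)) := by
      intro τ
      have hvec : Continuous (fun ε : ℝ =>
          (Fin.cons ((μ : ℂ) + ε * Complex.I) (fun i => w' i + v i * τ) : Fin (m+1) → ℂ)) := by
        apply continuous_pi
        intro i
        refine Fin.cases ?_ ?_ i
        · simp only [Fin.cons_zero]
          exact continuous_const.add ((Complex.continuous_ofReal).mul continuous_const)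
        · intro j
          simp only [Fin.cons_succ]
          exact continuous_const
      have heq : (fun ε : ℝ => Complex.abs ((p (ε * Complex.I)).eval τ))
          = (fun ε : ℝ => Complex.abs (MvPolynomial.eval
              (Fin.cons ((μ : ℂ) + ε * Complex.I) (fun i => w' i + v i * τ)) fC)) := by
        funext ε
        rw [hEval]
      rw [heq]
      exact Complex.continuous_abs.comp ((MvPolynomial.continuous_eval fC).comp hvec)
    have hF : Continuous (fun ε : ℝ =>
        (3/2 : ℝ) ^ D * Complex.abs ((p (ε * Complex.I)).eval 0)
          - Complex.abs ((p (ε * Complex.I)).eval t)) :=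
      (continuous_const.mul (hcont 0)).sub (hcont t)
    have hge : ∀ ε : ℝ, 0 < ε →
        0 ≤ (3/2 : ℝ) ^ D * Complex.abs ((p (ε * Complex.I)).eval 0)
          - Complex.abs ((p (ε * Complex.I)).eval t) := by
      intro ε hε
      have him' : 0 < ((ε : ℂ) * Complex.I).im := by simp [hε]
      linarith [hkey ((ε : ℂ) * Complex.I) him' t ht]
    have h0 : 0 ≤ (3/2 : ℝ) ^ D * Complex.abs ((p (0 : ℂ)).eval 0)
        - Complex.abs ((p (0 : ℂ)).eval t) := by
      have htend : Filter.Tendsto (fun ε : ℝ =>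
          (3/2 : ℝ) ^ D * Complex.abs ((p (ε * Complex.I)).eval 0)
            - Complex.abs ((p (ε * Complex.I)).eval t)) (nhdsWithin 0 (Set.Ioi 0))
          (nhds ((3/2 : ℝ) ^ D * Complex.abs ((p ((0:ℝ) * Complex.I)).eval 0)
            - Complex.abs ((p ((0:ℝ) * Complex.I)).eval t))) :=
        (hF.tendsto 0).mono_left nhdsWithin_le_nhds
      have := ge_of_tendsto htend (by
        filter_upwards [self_mem_nhdsWithin] with ε hε
        exact hge ε hε)
      simpa using this
    -- `(p 0).eval 0 = g w' = 0`
    have hzero : (p (0 : ℂ)).eval 0 = 0 := by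
      rw [hEval]
      have : (Fin.cons ((μ : ℂ) + 0) (fun i => w' i + v i * 0) : Fin (m+1) → ℂ)
          = Fin.cons (μ : ℂ) w' := by
        funext i
        refine Fin.cases ?_ ?_ i <;> simp
      rw [this, ← haev]
      exact hgw'
    rw [hzero] at h0
    simp only [map_zero, mul_zero] at h0
    have : Complex.abs ((p (0 : ℂ)).eval t) = 0 := le_antisymm (by linarith) (AbsoluteValue.nonneg _ _)
    exact (AbsoluteValue.eq_zero _).mp this
  -- hence `p 0` has infinitely many roots, so it is zero
  have hp0 : p (0 : ℂ) = 0 := by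
    apply Polynomial.eq_zero_of_infinite_isRoot
    have hinf : ((fun r : ℝ => (r : ℂ)) '' Set.Icc 0 (δ / 2)).Infinite :=
      Set.Infinite.image (Function.Injective.injOn Complex.ofReal_injective)
        (Set.Icc_infinite (by linarith))
    refine Set.Infinite.mono ?_ hinf
    rintro x ⟨r, ⟨hr0, hr1⟩, rfl⟩
    show (p 0).IsRoot _
    apply hlimit
    rw [Complex.abs_ofReal, abs_of_nonneg hr0]
    exact hr1
  -- but `p 0` evaluated at `1` is `g w₀ ≠ 0`
  apply hg0
  have h1 : (p (0 : ℂ)).eval 1 = 0 := by rw [hp0]; simp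
  rw [hEval] at h1
  have h2 : (Fin.cons ((μ : ℂ) + 0) (fun i => w' i + v i * 1) : Fin (m+1) → ℂ)
      = Fin.cons (μ : ℂ) w₀ := by
    funext i
    refine Fin.cases ?_ ?_ i
    · simp
    · intro j
      simp [hv]
  rw [h2, ← haev] at h1
  exact h1
end

section
/- Let f be a real stable polynomial in the complex variables z_1,…,z_m. Then the partial derivative ∂f/∂z_1 is either identically zero or real stable in z_1,…,z_m. -/
section Univariate
open Polynomial Filter

lemma prod_abs_le (s₀ : ℂ) (ρ : ℝ) (hs₀ : norm s₀ ≤ ρ) :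
    ∀ R : Multiset ℂ, (∀ r ∈ R, ρ < norm r) →
      (R.map fun r => norm (s₀ - r)).prod ≤
        2 ^ Multiset.card R * (R.map fun r => norm r).prod := by
  intro R
  induction R using Multiset.induction_on with
  | empty => simp
  | cons r R ih =>
    intro hR
    have hr : ρ < norm r := hR r (Multiset.mem_cons_self r R)
    have ih' := ih (fun s hs => hR s (Multiset.mem_cons_of_mem hs))
    simp only [Multiset.map_cons, Multiset.prod_cons, Multiset.card_cons]
    have h1 : norm (s₀ - r) ≤ 2 * norm r := by
      calc norm (s₀ - r) ≤ norm s₀ + norm r := by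
            simpa [sub_eq_add_neg] using norm_add_le s₀ (-r)
        _ ≤ 2 * norm r := by linarith
    have hnn : (0:ℝ) ≤ (R.map fun r => norm (s₀ - r)).prod :=
      Multiset.prod_nonneg (by
        intro a ha
        obtain ⟨b, _, rfl⟩ := Multiset.mem_map.1 ha
        exact (norm_nonneg _))
    calc norm (s₀ - r) * (R.map fun r => norm (s₀ - r)).prod
        ≤ (2 * norm r) * (2 ^ Multiset.card R * (R.map fun r => norm r).prod) := by
          apply mul_le_mul h1 ih' hnn
          positivity
      _ = 2 ^ (Multiset.card R + 1) * (norm r * (R.map fun r => norm r).prod) := by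
          ring
lemma disc_bound (p : Polynomial ℂ) (ρ : ℝ)
    (h : ∀ s : ℂ, norm s ≤ ρ → p.eval s ≠ 0) (s₀ : ℂ) (hs₀ : norm s₀ ≤ ρ) :
    norm (p.eval s₀) ≤ 2 ^ p.natDegree * norm (p.eval 0) := by
  have hρ : (0:ℝ) ≤ ρ := le_trans (norm_nonneg s₀) hs₀
  have hp0 : p ≠ 0 := by
    intro hh
    exact h 0 (by simpa using hρ) (by simp [hh])
  have hsplits : Splits p := IsAlgClosed.splits p
  have hfact := hsplits.eq_prod_roots
  have hroots : ∀ r ∈ p.roots, ρ < norm r := by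
    intro r hr
    by_contra hc
    push_neg at hc
    exact h r hc ((mem_roots hp0).1 hr)
  have habs : ∀ y : ℂ, norm (p.eval y)
      = norm p.leadingCoeff * (p.roots.map fun r => norm (y - r)).prod := by
    intro y
    conv_lhs => rw [hfact]
    rw [eval_mul, eval_C, norm_mul]
    congr 1
    rw [eval_multiset_prod, ← normHom_apply, map_multiset_prod, Multiset.map_map, Multiset.map_map]
    exact congrArg Multiset.prod (Multiset.map_congr rfl (by intro r _; simp))
  have h0 : norm (p.eval 0)
      = norm p.leadingCoeff * (p.roots.map fun r => norm r).prod := by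
    simpa [zero_sub] using habs 0
  rw [habs s₀, h0]
  have key := prod_abs_le s₀ ρ hs₀ p.roots hroots
  calc norm p.leadingCoeff * (p.roots.map fun r => norm (s₀ - r)).prod
      ≤ norm p.leadingCoeff *
        (2 ^ Multiset.card p.roots * (p.roots.map fun r => norm r).prod) :=
        mul_le_mul_of_nonneg_left key (norm_nonneg _)
    _ ≤ 2 ^ p.natDegree * (norm p.leadingCoeff * (p.roots.map fun r => norm r).prod) := by
        rw [← mul_assoc, mul_comm (norm p.leadingCoeff) ((2:ℝ) ^ Multiset.card p.roots), mul_assoc]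
        apply mul_le_mul_of_nonneg_right
        · apply pow_le_pow_right₀ one_le_two (Polynomial.card_roots' p)
        · exact mul_nonneg (norm_nonneg _) (Multiset.prod_nonneg (by
            intro a ha
            obtain ⟨b, _, rfl⟩ := Multiset.mem_map.1 ha
            exact norm_nonneg _))

lemma ratio_im_neg (x : ℂ) (hx : 0 < x.im) :
    ∀ R : Multiset ℂ, (∀ r ∈ R, r.im ≤ 0) →
      (((R.map fun r => X - C r).prod).eval x ≠ 0 ∧
        ((Polynomial.derivative ((R.map fun r => X - C r).prod)).eval x /
          ((R.map fun r => X - C r).prod).eval x).im ≤ 0 ∧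
        (R ≠ 0 → ((Polynomial.derivative ((R.map fun r => X - C r).prod)).eval x /
          ((R.map fun r => X - C r).prod).eval x).im < 0)) := by
  intro R
  induction R using Multiset.induction_on with
  | empty => simp
  | cons r R ih =>
    intro hR
    have hr : r.im ≤ 0 := hR r (Multiset.mem_cons_self r R)
    obtain ⟨h1, h2, _⟩ := ih (fun s hs => hR s (Multiset.mem_cons_of_mem hs))
    have hxr : (x - r) ≠ 0 := by
      intro h
      have : (x - r).im = 0 := by rw [h]; simp
      simp only [Complex.sub_im] at this
      linarith
    have hxrim : 0 < (x - r).im := by simp only [Complex.sub_im]; linarith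
    set p := ((R.map fun r => X - C r).prod) with hp
    have hprod : (((r ::ₘ R).map fun r => X - C r).prod) = (X - C r) * p := by
      rw [Multiset.map_cons, Multiset.prod_cons]
    have heval : (((r ::ₘ R).map fun r => X - C r).prod).eval x = (x - r) * p.eval x := by
      rw [hprod]; simp
    have hd : (Polynomial.derivative (((r ::ₘ R).map fun r => X - C r).prod)).eval x
        = p.eval x + (x - r) * (Polynomial.derivative p).eval x := by
      rw [hprod, derivative_mul]; simp [mul_comm]
    have hne : (((r ::ₘ R).map fun r => X - C r).prod).eval x ≠ 0 := by
      rw [heval]; exact mul_ne_zero hxr h1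
    refine ⟨hne, ?_, ?_⟩ <;>
    · have hsplit : (Polynomial.derivative (((r ::ₘ R).map fun r => X - C r).prod)).eval x /
          (((r ::ₘ R).map fun r => X - C r).prod).eval x
          = (x - r)⁻¹ + (Polynomial.derivative p).eval x / p.eval x := by
        rw [hd, heval]
        field_simp
      have hinv : ((x - r)⁻¹).im < 0 := by
        rw [Complex.inv_im]
        apply div_neg_of_neg_of_pos
        · linarith
        · exact Complex.normSq_pos.2 hxr
      rw [hsplit, Complex.add_im]
      first
      | linarith
      | (intro _; linarith)

lemma deriv_ne_zero_of_stable (p : Polynomial ℂ)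
    (hstab : ∀ z : ℂ, 0 < z.im → p.eval z ≠ 0) (hdeg : p.natDegree ≠ 0)
    (x : ℂ) (hx : 0 < x.im) : (Polynomial.derivative p).eval x ≠ 0 := by
  have hp0 : p ≠ 0 := by
    intro h
    exact hstab Complex.I (by simp) (by simp [h])
  have hsplits : Splits p := IsAlgClosed.splits p
  have hfact := hsplits.eq_prod_roots
  have hcard : p.roots.card = p.natDegree := by
    have := hsplits.natDegree_eq_card_roots
    simpa using this.symm
  have hroots : ∀ r ∈ p.roots, r.im ≤ 0 := by
    intro r hr
    by_contra h
    push_neg at h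
    exact hstab r h ((mem_roots hp0).1 hr)
  obtain ⟨h1, _, h3⟩ := ratio_im_neg x hx p.roots hroots
  have hR0 : p.roots ≠ 0 := by
    intro h
    rw [h] at hcard
    simp at hcard
    exact hdeg hcard.symm
  have hratio := h3 hR0
  set q := ((p.roots.map fun r => X - C r).prod) with hq
  have hdq : (Polynomial.derivative q).eval x ≠ 0 := by
    intro h
    rw [h] at hratio
    simp at hratio
  have : Polynomial.derivative p = C p.leadingCoeff * Polynomial.derivative q := by
    conv_lhs => rw [hfact]
    rw [derivative_mul, derivative_C, zero_mul, zero_add]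
  rw [this]
  simp only [eval_mul, eval_C]
  exact mul_ne_zero (leadingCoeff_ne_zero.2 hp0) hdq

lemma eval_nI_tendsto (r : Polynomial ℂ) (d : ℕ) (hd : r.natDegree ≤ d) :
    Tendsto (fun n : ℕ => r.eval ((n:ℂ) * Complex.I) / ((n:ℂ) * Complex.I) ^ d)
      atTop (nhds (r.coeff d)) := by
  set C₀ := ∑ k ∈ Finset.range d, norm (r.coeff k) with hC₀
  have hbound : ∀ n : ℕ, 1 ≤ n →
      ‖r.eval ((n:ℂ) * Complex.I) / ((n:ℂ) * Complex.I) ^ d - r.coeff d‖ ≤ C₀ / n := by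
    intro n hn
    have hn0 : (0:ℝ) < n := by exact_mod_cast hn
    have hn1 : (1:ℝ) ≤ n := by exact_mod_cast hn
    have hz : ((n:ℂ) * Complex.I) ≠ 0 := by
      simp only [ne_eq, mul_eq_zero, Complex.I_ne_zero, or_false, Complex.ofReal_eq_zero]
      exact_mod_cast hn0.ne'
    have hzd : ((n:ℂ) * Complex.I) ^ d ≠ 0 := pow_ne_zero _ hz
    have heval : r.eval ((n:ℂ) * Complex.I)
        = ∑ k ∈ Finset.range (d + 1), r.coeff k * ((n:ℂ) * Complex.I) ^ k :=
      eval_eq_sum_range' (Nat.lt_succ_of_le hd) _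
    have hsplit : r.eval ((n:ℂ) * Complex.I) / ((n:ℂ) * Complex.I) ^ d - r.coeff d
        = ∑ k ∈ Finset.range d, r.coeff k * ((n:ℂ) * Complex.I) ^ k / ((n:ℂ) * Complex.I) ^ d := by
      rw [heval, Finset.sum_range_succ, add_div, mul_div_assoc, div_self hzd, mul_one,
        add_sub_cancel_right, Finset.sum_div]
    rw [hsplit]
    calc norm (∑ k ∈ Finset.range d,
            r.coeff k * ((n:ℂ) * Complex.I) ^ k / ((n:ℂ) * Complex.I) ^ d)
        ≤ ∑ k ∈ Finset.range d,
            norm (r.coeff k * ((n:ℂ) * Complex.I) ^ k / ((n:ℂ) * Complex.I) ^ d) :=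
          norm_sum_le _ _
      _ ≤ ∑ k ∈ Finset.range d, norm (r.coeff k) / n := by
          apply Finset.sum_le_sum
          intro k hk
          have hkd : k + 1 ≤ d := Finset.mem_range.1 hk
          have habsnI : norm ((n:ℂ) * Complex.I) = n := by
            rw [norm_mul, Complex.norm_I, mul_one, Complex.norm_natCast]
          rw [norm_div, norm_mul, norm_pow, norm_pow, habsnI]
          rw [div_le_div_iff₀ (by positivity) hn0]
          calc norm (r.coeff k) * (n:ℝ) ^ k * n
              = norm (r.coeff k) * (n:ℝ) ^ (k + 1) := by ring
            _ ≤ norm (r.coeff k) * (n:ℝ) ^ d := by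
                apply mul_le_mul_of_nonneg_left (pow_le_pow_right₀ hn1 hkd) (norm_nonneg _)
      _ = C₀ / n := by rw [Finset.sum_div]
  have hzero : Tendsto (fun n : ℕ =>
      r.eval ((n:ℂ) * Complex.I) / ((n:ℂ) * Complex.I) ^ d - r.coeff d) atTop (nhds 0) := by
    apply squeeze_zero_norm' _ (tendsto_const_div_atTop_nhds_zero_nat C₀)
    filter_upwards [eventually_ge_atTop 1] with n hn
    exact hbound n hn
  have := hzero.add_const (r.coeff d)
  simpa using this

end Univariate

open MvPolynomial Polynomial Filter BigOperators

-- Lemma A: transfer eval through finSuccEquiv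
lemma aeval_fse {m : ℕ} {S : Type*} [CommRing S] [Algebra ℝ S] (g : Fin m → S) (t : S)
    (f : MvPolynomial (Fin (m + 1)) ℝ) :
    Polynomial.eval t ((finSuccEquiv ℝ m f).map
      (MvPolynomial.aeval g : MvPolynomial (Fin m) ℝ →ₐ[ℝ] S).toRingHom) =
      MvPolynomial.aeval (Fin.cons t g) f := by
  have h : ((Polynomial.evalRingHom t).comp
      ((Polynomial.mapRingHom (MvPolynomial.aeval g : MvPolynomial (Fin m) ℝ →ₐ[ℝ] S).toRingHom).comp
        (finSuccEquiv ℝ m : MvPolynomial (Fin (m+1)) ℝ →+* Polynomial (MvPolynomial (Fin m) ℝ)))) =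
      (MvPolynomial.aeval (Fin.cons t g : Fin (m+1) → S)).toRingHom := by
    apply MvPolynomial.ringHom_ext
    · intro r
      simp [finSuccEquiv_apply]
    · intro i
      refine Fin.cases ?_ ?_ i
      · simp [finSuccEquiv_X_zero]
      · intro j
        simp [finSuccEquiv_X_succ]
  exact RingHom.congr_fun h f

lemma fse_pderiv {m : ℕ} (f : MvPolynomial (Fin (m + 1)) ℝ) :
    finSuccEquiv ℝ m (pderiv 0 f) = Polynomial.derivative (finSuccEquiv ℝ m f) := by
  induction f using MvPolynomial.induction_on with
  | C a => simp [pderiv_C, finSuccEquiv_apply]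
  | add p q hp hq => simp [map_add, hp, hq]
  | mul_X p i ih =>
    rw [pderiv_mul, map_add, map_mul, map_mul, ih, map_mul, derivative_mul]
    refine Fin.cases ?_ ?_ i
    · simp [pderiv_X_self, finSuccEquiv_X_zero]
    · intro j
      simp [pderiv_X_of_ne (Fin.succ_ne_zero j), finSuccEquiv_X_succ]

-- helper: evaluate an aeval into ℂ[X]
lemma eval_aeval {k : ℕ} (g : Fin k → Polynomial ℂ) (x : ℂ) (c : MvPolynomial (Fin k) ℝ) :
    Polynomial.eval x (MvPolynomial.aeval g c) =
      MvPolynomial.aeval (fun i => Polynomial.eval x (g i)) c := by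
  have h : (Polynomial.evalRingHom x).comp
      (MvPolynomial.aeval g : MvPolynomial (Fin k) ℝ →ₐ[ℝ] Polynomial ℂ).toRingHom =
      (MvPolynomial.aeval (fun i => Polynomial.eval x (g i)) :
        MvPolynomial (Fin k) ℝ →ₐ[ℝ] ℂ).toRingHom := by
    apply MvPolynomial.ringHom_ext
    · intro r; simp
    · intro i; simp
  exact RingHom.congr_fun h c

-- helper: aeval at a real point
lemma mv_aeval_ofReal {k : ℕ} (y : Fin k → ℝ) (c : MvPolynomial (Fin k) ℝ) :
    MvPolynomial.aeval (fun i => ((y i : ℝ) : ℂ)) c = ((MvPolynomial.eval y c : ℝ) : ℂ) := by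
  have h : (Complex.ofRealHom).comp (MvPolynomial.eval y) =
      (MvPolynomial.aeval (fun i => ((y i : ℝ) : ℂ)) :
        MvPolynomial (Fin k) ℝ →ₐ[ℝ] ℂ).toRingHom := by
    apply MvPolynomial.ringHom_ext
    · intro r; simp
    · intro i; simp
  exact (RingHom.congr_fun h c).symm

lemma lead_stable {m : ℕ} (f : MvPolynomial (Fin (m + 1)) ℝ)
    (hf : ∀ z : Fin (m + 1) → ℂ, (∀ i, 0 < (z i).im) → MvPolynomial.aeval z f ≠ 0)
    (w : Fin m → ℂ) (hw : ∀ i, 0 < (w i).im) :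
    MvPolynomial.aeval w ((finSuccEquiv ℝ m f).leadingCoeff) ≠ 0 := by
  intro h0
  set Q := finSuccEquiv ℝ m f with hQdef
  have hf0 : f ≠ 0 := fun h => hf (fun _ => Complex.I) (fun i => by simp) (by simp [h])
  have hQ0 : Q ≠ 0 := fun h => hf0 ((EmbeddingLike.map_eq_zero_iff).1 h)
  set c := Q.leadingCoeff with hcdef
  have hc0 : c ≠ 0 := leadingCoeff_ne_zero.2 hQ0
  -- a real point where c does not vanish
  obtain ⟨y, hy⟩ : ∃ y : Fin m → ℝ, MvPolynomial.eval y c ≠ 0 := by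
    by_contra hcon; push_neg at hcon
    exact hc0 (MvPolynomial.funext (fun x => by rw [hcon x, map_zero]))
  set v : Fin m → ℂ := fun j => (y j : ℂ) - w j with hvdef
  set line : Fin m → Polynomial ℂ :=
    fun j => Polynomial.C (w j) + Polynomial.X * Polynomial.C (v j) with hlinedef
  set φ : ℂ → Fin m → ℂ := fun s j => w j + s * v j with hφdef
  have hline : ∀ (s : ℂ) (c' : MvPolynomial (Fin m) ℝ),
      Polynomial.eval s (MvPolynomial.aeval line c') = MvPolynomial.aeval (φ s) c' := by
    intro s c'
    rw [eval_aeval]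
    have hfun : (fun i => Polynomial.eval s (line i)) = φ s := by
      funext j
      show Polynomial.eval s (Polynomial.C (w j) + Polynomial.X * Polynomial.C (v j))
        = w j + s * v j
      rw [Polynomial.eval_add, Polynomial.eval_mul, Polynomial.eval_X, Polynomial.eval_C,
        Polynomial.eval_C]
    rw [hfun]
  set q := MvPolynomial.aeval line c with hqdef
  have hφ0 : φ 0 = w := by funext j; simp [hφdef]
  have hφ1 : φ 1 = fun j => ((y j : ℝ) : ℂ) := by funext j; simp [hφdef, hvdef]
  have hq1 : Polynomial.eval 1 q ≠ 0 := by
    rw [hqdef, hline, hφ1, mv_aeval_ofReal]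
    exact_mod_cast Complex.ofReal_ne_zero.2 hy
  have hq0 : Polynomial.eval 0 q = 0 := by rw [hqdef, hline, hφ0]; exact h0
  have hq : q ≠ 0 := fun h => hq1 (by rw [h]; simp)
  -- the radius ρ
  set gδ : Fin m → ℝ := fun j => (w j).im / (2 * (norm (v j) + 1)) with hgδdef
  set F : Finset ℝ := insert 1 (Finset.univ.image gδ) with hFdef
  have hFne : F.Nonempty := ⟨1, Finset.mem_insert_self _ _⟩
  set ρ := F.min' hFne with hρdef
  have hFpos : ∀ a ∈ F, 0 < a := by
    intro a ha
    rcases Finset.mem_insert.1 ha with h | h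
    · rw [h]; norm_num
    · obtain ⟨j, _, rfl⟩ := Finset.mem_image.1 h
      have := hw j
      have := norm_nonneg (v j)
      positivity
  have hρpos : 0 < ρ := hFpos ρ (F.min'_mem hFne)
  have hρle : ∀ j, ρ ≤ gδ j := fun j =>
    F.min'_le _ (Finset.mem_insert_of_mem (Finset.mem_image_of_mem _ (Finset.mem_univ j)))
  have himb : ∀ s : ℂ, norm s ≤ ρ → ∀ j, 0 < (φ s j).im := by
    intro s hs j
    have h1 : (φ s j).im = (w j).im + (s * v j).im := by simp [hφdef]
    have h2 : |(s * v j).im| ≤ norm s * norm (v j) := by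
      calc |(s * v j).im| ≤ norm (s * v j) := Complex.abs_im_le_norm _
        _ = norm s * norm (v j) := norm_mul _ _
    have hvnn : (0:ℝ) ≤ norm (v j) := norm_nonneg _
    have hsnn : (0:ℝ) ≤ norm s := norm_nonneg _
    have him := hw j
    have h3 : norm s * norm (v j) ≤ gδ j * norm (v j) :=
      mul_le_mul_of_nonneg_right (le_trans hs (hρle j)) hvnn
    have h4 : gδ j * norm (v j) < (w j).im := by
      rw [hgδdef]
      have hden : (0:ℝ) < 2 * (norm (v j) + 1) := by positivity
      rw [div_mul_eq_mul_div, div_lt_iff₀ hden]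
      nlinarith
    have h5 : -(s * v j).im ≤ norm s * norm (v j) := by
      have := abs_le.1 h2
      linarith [this.1]
    rw [h1]
    linarith
  -- a good point s₀
  obtain ⟨s₀, hs₀ρ, hs₀q⟩ : ∃ s₀ : ℂ, norm s₀ ≤ ρ ∧ Polynomial.eval s₀ q ≠ 0 := by
    by_contra hcon; push_neg at hcon
    have hsub : (Complex.ofReal '' Set.Icc 0 ρ) ⊆ {x : ℂ | Polynomial.IsRoot q x} := by
      rintro x ⟨t, ht, rfl⟩
      have habs : norm (t : ℂ) ≤ ρ := by
        rw [Complex.norm_real, Real.norm_eq_abs, abs_of_nonneg ht.1]; exact ht.2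
      exact hcon _ habs
    have hinf : (Complex.ofReal '' Set.Icc 0 ρ).Infinite :=
      (Set.Icc_infinite hρpos).image (Complex.ofReal_injective.injOn)
    exact hq (Polynomial.eq_zero_of_infinite_isRoot q (hinf.mono hsub))
  -- the polynomials p n in the variable s
  set d := Q.natDegree with hddef
  set ψ : MvPolynomial (Fin m) ℝ →+* Polynomial ℂ :=
    (MvPolynomial.aeval line : MvPolynomial (Fin m) ℝ →ₐ[ℝ] Polynomial ℂ).toRingHom with hψdef
  set QL := Q.map ψ with hQLdef
  have hQLdeg : QL.natDegree ≤ d := natDegree_map_le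
  set D := (Finset.range (d + 1)).sup (fun k => (QL.coeff k).natDegree) with hDdef
  set p : ℕ → Polynomial ℂ := fun n => QL.eval (Polynomial.C ((n:ℂ) * Complex.I)) with hpdef
  have hpdeg : ∀ n, (p n).natDegree ≤ D := by
    intro n
    have he : p n = ∑ k ∈ Finset.range (d + 1),
        QL.coeff k * (Polynomial.C ((n:ℂ) * Complex.I)) ^ k :=
      eval_eq_sum_range' (lt_of_le_of_lt hQLdeg (Nat.lt_succ_self d)) _
    rw [he]
    apply natDegree_sum_le_of_forall_le
    intro k hk
    calc (QL.coeff k * (Polynomial.C ((n:ℂ) * Complex.I)) ^ k).natDegree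
        ≤ (QL.coeff k).natDegree + ((Polynomial.C ((n:ℂ) * Complex.I)) ^ k).natDegree :=
          natDegree_mul_le
      _ ≤ D := by
          rw [← Polynomial.C_pow, Polynomial.natDegree_C, add_zero]
          exact Finset.le_sup (f := fun k => (QL.coeff k).natDegree) hk
  -- the two key identities
  set rs : ℂ → Polynomial ℂ := fun s => Q.map
    (MvPolynomial.aeval (φ s) : MvPolynomial (Fin m) ℝ →ₐ[ℝ] ℂ).toRingHom with hrsdef
  have hkey : ∀ (s : ℂ) (n : ℕ),
      Polynomial.eval s (p n) = (rs s).eval ((n:ℂ) * Complex.I) := by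
    intro s n
    have hcomp : (Polynomial.evalRingHom s).comp ψ =
        (MvPolynomial.aeval (φ s) : MvPolynomial (Fin m) ℝ →ₐ[ℝ] ℂ).toRingHom :=
      RingHom.ext fun c' => hline s c'
    rw [hpdef, hrsdef]
    show Polynomial.evalRingHom s ((Q.map ψ).eval (Polynomial.C ((n:ℂ) * Complex.I))) = _
    have e1 : (Polynomial.evalRingHom s) (Polynomial.C ((n:ℂ) * Complex.I))
        = (n:ℂ) * Complex.I := by simp
    rw [Polynomial.eval_map, Polynomial.hom_eval₂, hcomp, e1, ← Polynomial.eval_map]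
  have hzf : ∀ n : ℕ, 1 ≤ n → ∀ s : ℂ, norm s ≤ ρ → Polynomial.eval s (p n) ≠ 0 := by
    intro n hn s hs
    rw [hkey s n, hrsdef]
    show Polynomial.eval _ (Polynomial.map _ (finSuccEquiv ℝ m f)) ≠ 0
    rw [aeval_fse]
    apply hf
    intro i
    refine Fin.cases ?_ ?_ i
    · simp only [Fin.cons_zero, Complex.mul_im, Complex.natCast_re, Complex.I_im,
        Complex.natCast_im, Complex.I_re, mul_one, mul_zero, add_zero]
      exact_mod_cast hn
    · intro j
      simpa [Fin.cons_succ] using himb s hs j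
  -- limits
  have hlim : ∀ s : ℂ, Tendsto (fun n : ℕ => (rs s).eval ((n:ℂ) * Complex.I)
      / ((n:ℂ) * Complex.I) ^ d) atTop (nhds (MvPolynomial.aeval (φ s) c)) := by
    intro s
    have h1 : (rs s).natDegree ≤ d := natDegree_map_le
    have h2 := eval_nI_tendsto (rs s) d h1
    have h3 : (rs s).coeff d = MvPolynomial.aeval (φ s) c := by
      rw [hrsdef]
      show (Polynomial.map _ Q).coeff d = _
      rw [Polynomial.coeff_map]
      congr 1
    rwa [h3] at h2
  have hineq : ∀ᶠ n : ℕ in atTop,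
      norm ((rs s₀).eval ((n:ℂ) * Complex.I) / ((n:ℂ) * Complex.I) ^ d)
        ≤ 2 ^ D * norm ((rs 0).eval ((n:ℂ) * Complex.I) / ((n:ℂ) * Complex.I) ^ d) := by
    filter_upwards [eventually_ge_atTop 1] with n hn
    have hb := disc_bound (p n) ρ (hzf n hn) s₀ hs₀ρ
    have hb2 : norm ((p n).eval s₀) ≤ 2 ^ D * norm ((p n).eval 0) := by
      refine le_trans hb (mul_le_mul_of_nonneg_right ?_ (norm_nonneg _))
      exact pow_le_pow_right₀ one_le_two (hpdeg n)
    rw [hkey s₀ n, hkey 0 n] at hb2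
    have hz : ((n:ℂ) * Complex.I) ≠ 0 := by
      simp only [ne_eq, mul_eq_zero, Complex.I_ne_zero, or_false, Nat.cast_eq_zero]
      omega
    have ht : 0 < norm (((n:ℂ) * Complex.I) ^ d) :=
      norm_pos_iff.2 (pow_ne_zero _ hz)
    rw [norm_div, norm_div, ← mul_div_assoc]
    gcongr
  -- conclusion
  have h1 := (continuous_norm.tendsto _).comp (hlim s₀)
  have h2 := (continuous_norm.tendsto _).comp (hlim 0)
  have hle := le_of_tendsto_of_tendsto h1 ((h2.const_mul (2 ^ D : ℝ))) hineq
  rw [hφ0, h0, norm_zero, mul_zero] at hle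
  have hzero : MvPolynomial.aeval (φ s₀) c = 0 := by
    have habs0 : norm (MvPolynomial.aeval (φ s₀) c) = 0 :=
      le_antisymm hle (norm_nonneg _)
    exact norm_eq_zero.1 habs0
  apply hs₀q
  rw [hqdef, hline]
  exact hzero

/-- **Differentiation preserves real stability.**  Let `f` be a real stable polynomial in
`z_1, …, z_{m+1}` (real coefficients, nonvanishing when all variables have positive
imaginary part).  Then `∂f/∂z_1` is either identically zero or real stable. -/
theorem real_stable_pderiv {m : ℕ} (f : MvPolynomial (Fin (m + 1)) ℝ)
    (hf : ∀ z : Fin (m + 1) → ℂ, (∀ i, 0 < (z i).im) → MvPolynomial.aeval z f ≠ 0) :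
    MvPolynomial.pderiv (0 : Fin (m + 1)) f = 0 ∨
    (∀ z : Fin (m + 1) → ℂ, (∀ i, 0 < (z i).im) →
        MvPolynomial.aeval z (MvPolynomial.pderiv (0 : Fin (m + 1)) f) ≠ 0) := by
  by_cases hd : (finSuccEquiv ℝ m f).natDegree = 0
  · left
    apply (finSuccEquiv ℝ m).injective
    rw [fse_pderiv, map_zero]
    rw [Polynomial.eq_C_of_natDegree_eq_zero hd]
    exact Polynomial.derivative_C
  · right
    intro z hz
    set x := z 0 with hxdef
    set w := Fin.tail z with hwdef
    have hzcons : z = Fin.cons x w := (Fin.cons_self_tail z).symm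
    have hx : 0 < x.im := hz 0
    have hw : ∀ j, 0 < (w j).im := fun j => hz j.succ
    set P := (finSuccEquiv ℝ m f).map
      (MvPolynomial.aeval w : MvPolynomial (Fin m) ℝ →ₐ[ℝ] ℂ).toRingHom with hPdef
    have hPstab : ∀ yy : ℂ, 0 < yy.im → P.eval yy ≠ 0 := by
      intro yy hyy
      rw [hPdef, aeval_fse]
      apply hf
      intro i
      refine Fin.cases ?_ ?_ i
      · simpa using hyy
      · intro j
        simpa using hw j
    have hcoeff : P.coeff (finSuccEquiv ℝ m f).natDegree
        = MvPolynomial.aeval w (finSuccEquiv ℝ m f).leadingCoeff := by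
      rw [hPdef, Polynomial.coeff_map, Polynomial.coeff_natDegree]
      rfl
    have hlead := lead_stable f hf w hw
    have hPdeg : P.natDegree = (finSuccEquiv ℝ m f).natDegree :=
      le_antisymm Polynomial.natDegree_map_le
        (Polynomial.le_natDegree_of_ne_zero (by rw [hcoeff]; exact hlead))
    have hPd0 : P.natDegree ≠ 0 := by rw [hPdeg]; exact hd
    have hder := deriv_ne_zero_of_stable P hPstab hPd0 x hx
    have htrans : MvPolynomial.aeval z (MvPolynomial.pderiv (0 : Fin (m + 1)) f)
        = (Polynomial.derivative P).eval x := by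
      rw [hzcons, ← aeval_fse w x (MvPolynomial.pderiv (0 : Fin (m + 1)) f), fse_pderiv,
        hPdef, ← Polynomial.derivative_map]
    rw [htrans]
    exact hder
end
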